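/- arXiv:1906.04776 — 3 statements merged into one kernel-verified Lean document; each statement's English description precedes it below -/
import Mathlib

section
/- Let b = ((b_{st}))_{1≤s,t≤K} be a symmetric K×K matrix of nonnegative integers satisfying 2·b_{ss} + Σ_{t≠s} b_{st} = N_s for every s ∈ {1,…,K}. Then, for a uniformly random labeling L, the probability that a_{st}(L) = b_{st} for all 1 ≤ s ≤ t ≤ K equals (N_1!⋯N_K!/N!) · 2^{Σ_{1≤s<t≤K} b_{st}} · I! / Π_{1≤s≤t≤K} (b_{st}!). -/
open Finset Filter MeasureTheory ProbabilityTheory Topology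

namespace Crossmatch

/-- First endpoint (index `2j`, i.e., the paper's `2j-1` in 1-based indexing) of the `j`-th
matched pair in the fixed perfect matching on `{1, …, 2I}`. -/
def ep1 {I : ℕ} (j : Fin I) : Fin (2 * I) := ⟨2 * j.val, by have := j.isLt; omega⟩

/-- Second endpoint (index `2j+1`, i.e., the paper's `2j`) of the `j`-th matched pair. -/
def ep2 {I : ℕ} (j : Fin I) : Fin (2 * I) := ⟨2 * j.val + 1, by have := j.isLt; omega⟩

/-- The set of labelings `L : {1,…,2I} → {1,…,K}` assigning label `s` to exactly `Nc s`
indices, for every `s`. -/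
def labelings (I K : ℕ) (Nc : Fin K → ℕ) : Finset (Fin (2 * I) → Fin K) :=
  univ.filter fun L => ∀ s : Fin K, (univ.filter fun i => L i = s).card = Nc s

/-- The count `a_{st}(L)`: the number of matched pairs `j` with `{L(2j-1), L(2j)} = {s,t}`.
For `s ≠ t` this is the cross-count; for `s = t` it is the pure count (both endpoints labeled
`s`). -/
def crossCount (I K : ℕ) (L : Fin (2 * I) → Fin K) (s t : Fin K) : ℕ :=
  (univ.filter fun j : Fin I =>
    ({L (ep1 j), L (ep2 j)} : Finset (Fin K)) = ({s, t} : Finset (Fin K))).card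

/-- Expectation of a real-valued statistic under a uniformly random labeling. -/
noncomputable def expct (I K : ℕ) (Nc : Fin K → ℕ)
    (X : (Fin (2 * I) → Fin K) → ℝ) : ℝ :=
  (∑ L ∈ labelings I K Nc, X L) / ((labelings I K Nc).card : ℝ)

open Classical in
/-- Probability of an event under a uniformly random labeling. -/
noncomputable def pr (I K : ℕ) (Nc : Fin K → ℕ)
    (ev : (Fin (2 * I) → Fin K) → Prop) : ℝ :=
  (((labelings I K Nc).filter ev).card : ℝ) / ((labelings I K Nc).card : ℝ)

/-- Variance of a real-valued statistic under a uniformly random labeling. -/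
noncomputable def variance (I K : ℕ) (Nc : Fin K → ℕ)
    (X : (Fin (2 * I) → Fin K) → ℝ) : ℝ :=
  expct I K Nc (fun L => (X L - expct I K Nc X) ^ 2)

/-- Covariance of two real-valued statistics under a uniformly random labeling. -/
noncomputable def covar (I K : ℕ) (Nc : Fin K → ℕ)
    (X Y : (Fin (2 * I) → Fin K) → ℝ) : ℝ :=
  expct I K Nc (fun L => (X L - expct I K Nc X) * (Y L - expct I K Nc Y))

/-- The index set of (unordered) pairs `s < t`, indexing the cross-count vector. -/
abbrev Pairs (K : ℕ) := {q : Fin K × Fin K // q.1 < q.2}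

/-- The covariance matrix of the cross-count vector `(a_{st})_{s<t}` under a uniformly
random labeling. -/
noncomputable def covMatrix (I K : ℕ) (Nc : Fin K → ℕ) :
    Matrix (Pairs K) (Pairs K) ℝ :=
  Matrix.of fun q r =>
    covar I K Nc (fun L => (crossCount I K L q.1.1 q.1.2 : ℝ))
      (fun L => (crossCount I K L r.1.1 r.1.2 : ℝ))

def pairMap (I K : ℕ) (L : Fin (2 * I) → Fin K) (j : Fin I) : Fin K × Fin K :=
  (L (ep1 j), L (ep2 j))

section FiberCount
variable {α β : Type*} [Fintype α] [DecidableEq α] [Fintype β] [DecidableEq β]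

private lemma auxCastHelper {β : Type*} {c : β → ℕ} {b : β} {x : Fin (c b)} (p : Σ b, Fin (c b))
    (hp : p = ⟨b, x⟩) (h : p.1 = b) : Fin.cast (congrArg c h) p.2 = x := by
  subst hp; rfl

/-- Fiberwise equiv data from a global equiv. -/
noncomputable def auxFiberEquiv (c : β → ℕ) (e : α ≃ (Σ b, Fin (c b))) (b : β) :
    {a // (e a).1 = b} ≃ Fin (c b) where
  toFun := fun x => Fin.cast (congrArg c x.2) (e x.1).2
  invFun := fun x => ⟨e.symm ⟨b, x⟩, by simp⟩
  left_inv := by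
    rintro ⟨a, h⟩
    subst h
    simp
  right_inv := fun x => auxCastHelper _ (e.apply_symm_apply _) (by simp)

theorem auxCardFiberFilterMul (c : β → ℕ) (hc : ∑ b, c b = Fintype.card α) :
    ((univ : Finset (α → β)).filter fun f => ∀ b, (univ.filter fun a => f a = b).card = c b).card
      * ∏ b, (c b).factorial = (Fintype.card α).factorial := by
  classical
  have e0 : α ≃ (Σ b, Fin (c b)) := by
    apply Fintype.equivOfCardEq
    simp [Fintype.card_sigma, hc]
  set P : (α → β) → Prop := fun f => ∀ b, (univ.filter fun a => f a = b).card = c b with hP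
  let B : (Σ f : {f : α → β // P f}, Π b, ({a // f.1 a = b} ≃ Fin (c b))) →
      (α ≃ (Σ b, Fin (c b))) :=
    fun x => (Equiv.sigmaFiberEquiv x.1.1).symm.trans (Equiv.sigmaCongrRight x.2)
  have hBapp : ∀ x a, B x a = ⟨x.1.1 a, x.2 (x.1.1 a) ⟨a, rfl⟩⟩ := fun x a => rfl
  have hBbij : Function.Bijective B := by
    constructor
    · rintro ⟨⟨f, hf⟩, g⟩ ⟨⟨f', hf'⟩, g'⟩ hEq
      have happ : ∀ a, (⟨f a, g (f a) ⟨a, rfl⟩⟩ : Σ b, Fin (c b)) = ⟨f' a, g' (f' a) ⟨a, rfl⟩⟩ :=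
        fun a => by
          have := congrArg (fun e => e a) hEq
          simpa [hBapp] using this
      have hff : f = f' := funext fun a => congrArg Sigma.fst (happ a)
      subst hff
      refine Sigma.ext rfl ?_
      simp only [heq_eq_eq]
      funext b
      apply Equiv.ext
      rintro ⟨a, ha⟩
      subst ha
      simpa using (Sigma.mk.inj_iff.mp (happ a)).2
    · intro e
      have hfib : ∀ b, (univ.filter fun a => (e a).1 = b).card = c b := by
        intro b
        have : Fintype.card {a // (e a).1 = b} = c b := by
          rw [Fintype.card_congr (auxFiberEquiv c e b), Fintype.card_fin]
        rw [← this, Fintype.card_subtype]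
      refine ⟨⟨⟨fun a => (e a).1, hfib⟩, auxFiberEquiv c e⟩, ?_⟩
      apply Equiv.ext
      intro a
      rw [hBapp]
      simp [auxFiberEquiv]
  have hcard := Fintype.card_of_bijective hBbij
  rw [Fintype.card_equiv e0] at hcard
  rw [Fintype.card_sigma] at hcard
  have hterm : ∀ f : {f : α → β // P f},
      Fintype.card (Π b, ({a // f.1 a = b} ≃ Fin (c b))) = ∏ b, (c b).factorial := by
    intro f
    rw [Fintype.card_pi]
    refine Finset.prod_congr rfl fun b _ => ?_
    have hcb : Fintype.card {a // f.1 a = b} = c b := by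
      rw [Fintype.card_subtype]; exact f.2 b
    have e1 : {a // f.1 a = b} ≃ Fin (c b) := Fintype.equivOfCardEq (by simp [hcb])
    rw [Fintype.card_equiv e1, hcb]
  rw [Finset.sum_congr rfl (fun f _ => hterm f), Finset.sum_const, smul_eq_mul] at hcard
  rw [← hcard, Finset.card_univ, Fintype.card_subtype]

end FiberCount

/-- Normalization of an ordered pair into a nondecreasing pair. -/
def norm2 {K : ℕ} (p : Fin K × Fin K) : Fin K × Fin K := if p.1 ≤ p.2 then p else (p.2, p.1)

lemma norm2_le {K : ℕ} (p : Fin K × Fin K) : (norm2 p).1 ≤ (norm2 p).2 := by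
  obtain ⟨u, v⟩ := p
  simp only [norm2]
  split
  · assumption
  · exact (not_le.mp ‹_›).le

lemma norm2_eq_iff {K : ℕ} (q : Fin K × Fin K) (hq : q.1 ≤ q.2) (p : Fin K × Fin K) :
    norm2 p = q ↔ p = q ∨ p = (q.2, q.1) := by
  obtain ⟨u, v⟩ := p
  obtain ⟨s, t⟩ := q
  simp only [norm2] at *
  split <;> simp only [Prod.ext_iff] <;>
    (simp only [Fin.ext_iff, Fin.le_def, not_le] at *; omega)

lemma pair_eq_norm2 {K : ℕ} (s t u v : Fin K) (hst : s ≤ t) :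
    (({u, v} : Finset (Fin K)) = {s, t}) ↔ norm2 (u, v) = (s, t) := by
  rw [← Finset.coe_inj]
  simp only [Finset.coe_insert, Finset.coe_singleton]
  rw [Set.pair_eq_pair_iff]
  simp only [norm2]
  split <;> simp only [Prod.ext_iff] <;>
    (simp only [Fin.ext_iff, Fin.le_def, not_le] at *; omega)

lemma count_norm2_fiber {K : ℕ} (q : Fin K × Fin K) (hq : q.1 ≤ q.2) :
    ((univ : Finset (Fin K × Fin K)).filter fun p => norm2 p = q).card
      = if q.1 < q.2 then 2 else 1 := by
  by_cases h : q.1 < q.2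
  · rw [if_pos h]
    have hset : ((univ : Finset (Fin K × Fin K)).filter fun p => norm2 p = q)
        = {q, (q.2, q.1)} := by
      ext p
      simp only [mem_filter, mem_univ, true_and, mem_insert, mem_singleton]
      exact norm2_eq_iff q hq p
    rw [hset]
    apply Finset.card_pair
    intro hcon
    have := congrArg Prod.fst hcon
    simp only at this
    exact absurd this (ne_of_lt h)
  · rw [if_neg h]
    have hqq : q.1 = q.2 := le_antisymm hq (not_lt.mp h)
    have hq2 : (q.2, q.1) = q := by
      obtain ⟨a, b⟩ := q
      simp only at hqq
      rw [hqq]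
    have hset : ((univ : Finset (Fin K × Fin K)).filter fun p => norm2 p = q) = {q} := by
      ext p
      simp only [mem_filter, mem_univ, true_and, mem_singleton]
      rw [norm2_eq_iff q hq p, hq2, or_self]
    rw [hset, Finset.card_singleton]

lemma crossCount_eq {I K : ℕ} (L : Fin (2 * I) → Fin K) (s t : Fin K) (hst : s ≤ t) :
    crossCount I K L s t
      = (univ.filter fun j : Fin I => norm2 (pairMap I K L j) = (s, t)).card := by
  unfold crossCount
  congr 1
  apply Finset.filter_congr
  intro j _
  exact pair_eq_norm2 s t _ _ hst

lemma pairMap_bijective (I K : ℕ) : Function.Bijective (pairMap I K) := by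
  constructor
  · intro L L' h
    funext i
    have hi := i.isLt
    by_cases h2 : i.val % 2 = 0
    · have hieq : i = ep1 ⟨i.val / 2, by omega⟩ := by
        simp only [ep1, Fin.ext_iff]; omega
      rw [hieq]
      exact congrArg Prod.fst (congrFun h ⟨i.val / 2, by omega⟩)
    · have hieq : i = ep2 ⟨i.val / 2, by omega⟩ := by
        simp only [ep2, Fin.ext_iff]; omega
      rw [hieq]
      exact congrArg Prod.snd (congrFun h ⟨i.val / 2, by omega⟩)
  · intro g
    refine ⟨fun i => if i.val % 2 = 0 then (g ⟨i.val / 2, by have := i.isLt; omega⟩).1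
      else (g ⟨i.val / 2, by have := i.isLt; omega⟩).2, ?_⟩
    funext j
    have hj := j.isLt
    unfold pairMap
    have h1 : (ep1 j).val % 2 = 0 := by simp only [ep1]; omega
    have h2 : ¬((ep2 j).val % 2 = 0) := by simp only [ep2]; omega
    rw [Prod.ext_iff]
    constructor
    · simp only [if_pos h1]
      exact congrArg (fun x => (g x).1) (by
        apply Fin.ext
        show (2 * j.val) / 2 = j.val
        omega)
    · simp only [if_neg h2]
      exact congrArg (fun x => (g x).2) (by
        apply Fin.ext
        show (2 * j.val + 1) / 2 = j.val
        omega)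

def e4 (I : ℕ) : Fin I × Bool ≃ Fin (2 * I) where
  toFun := fun x => if x.2 then ep2 x.1 else ep1 x.1
  invFun := fun i => (⟨i.val / 2, by have := i.isLt; omega⟩, decide (i.val % 2 = 1))
  left_inv := by
    rintro ⟨j, b⟩
    have hj := j.isLt
    cases b <;> simp only [ep1, ep2, if_true, if_false, Bool.false_eq_true] <;>
      refine Prod.ext ?_ ?_ <;> simp [Fin.ext_iff] <;> omega
  right_inv := by
    intro i
    have hi := i.isLt
    by_cases h : i.val % 2 = 1 <;> simp [h, ep1, ep2, Fin.ext_iff] <;> omega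

lemma sum_split {M : Type*} [AddCommMonoid M] (I : ℕ) (f : Fin (2 * I) → M) :
    ∑ i, f i = ∑ j : Fin I, (f (ep1 j) + f (ep2 j)) := by
  rw [← Equiv.sum_comp (e4 I) f, Fintype.sum_prod_type]
  apply Finset.sum_congr rfl
  intro j _
  rw [Fintype.sum_bool]
  simp only [e4, Equiv.coe_fn_mk, if_true, if_false, Bool.false_eq_true]
  exact add_comm _ _

/-- for a uniformly random labeling, the probability that the count matrix
equals `b` is `(N_1!⋯N_K!/N!) · 2^{Σ_{s<t} b_{st}} · I! / Π_{s≤t} (b_{st})!`. -/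
theorem stmt1 (K I : ℕ) (hK : 2 ≤ K) (hI : 1 ≤ I)
    (Nc : Fin K → ℕ) (hNpos : ∀ s, 0 < Nc s) (hNsum : ∑ s, Nc s = 2 * I)
    (b : Fin K → Fin K → ℕ) (hbsymm : ∀ s t, b s t = b t s)
    (hbrow : ∀ s : Fin K, 2 * b s s + ∑ t ∈ univ.erase s, b s t = Nc s) :
    pr I K Nc (fun L => ∀ s t : Fin K, s ≤ t → crossCount I K L s t = b s t)
      = ((∏ s, ((Nc s).factorial : ℝ)) / ((2 * I).factorial : ℝ))
        * ((2 : ℝ) ^ (∑ q ∈ univ.filter (fun q : Fin K × Fin K => q.1 < q.2), b q.1 q.2)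
            * (I.factorial : ℝ)
          / ∏ q ∈ univ.filter (fun q : Fin K × Fin K => q.1 ≤ q.2),
              ((b q.1 q.2).factorial : ℝ)) := by
  classical
  set ev : (Fin (2 * I) → Fin K) → Prop :=
    fun L => ∀ s t : Fin K, s ≤ t → crossCount I K L s t = b s t with hev
  set c : Fin K × Fin K → ℕ := fun q => if q.1 ≤ q.2 then b q.1 q.2 else 0 with hc
  set B : ℕ := ∑ q ∈ univ.filter (fun q : Fin K × Fin K => q.1 < q.2), b q.1 q.2 with hB
  -- (A) weighted sum identity
  have hW : ∀ s : Fin K,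
      (∑ q : Fin K × Fin K, c q * ((if q.1 = s then 1 else 0) + (if q.2 = s then 1 else 0)))
        = Nc s := by
    intro s
    have expand : ∀ u v : Fin K,
        c (u, v) * ((if u = s then 1 else 0) + (if v = s then 1 else 0))
          = (if u = s then c (u, v) else 0) + (if v = s then c (u, v) else 0) := by
      intro u v
      by_cases h1 : u = s <;> by_cases h2 : v = s <;> simp [h1, h2, mul_two]
    have point : ∀ t : Fin K, c (s, t) + c (t, s) = b s t + (if t = s then b s t else 0) := by
      intro t
      simp only [hc]
      by_cases h1 : s ≤ t <;> by_cases h2 : t ≤ s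
      · have hts : t = s := le_antisymm h2 h1
        subst hts
        simp
      · have hne : t ≠ s := fun h => h2 (le_of_eq h)
        simp [h1, h2, hne]
      · have hne : t ≠ s := fun h => h1 (le_of_eq h.symm)
        rw [if_neg h1, if_pos h2, if_neg hne, hbsymm t s]
        omega
      · exact absurd (le_total s t) (by simp [h1, h2])
    calc ∑ q : Fin K × Fin K, c q * ((if q.1 = s then 1 else 0) + (if q.2 = s then 1 else 0))
        = ∑ u : Fin K, ∑ v : Fin K,
            ((if u = s then c (u, v) else 0) + (if v = s then c (u, v) else 0)) := by
          rw [Fintype.sum_prod_type]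
          exact Finset.sum_congr rfl fun u _ => Finset.sum_congr rfl fun v _ => expand u v
      _ = (∑ u : Fin K, ∑ v : Fin K, if u = s then c (u, v) else 0)
            + ∑ u : Fin K, ∑ v : Fin K, if v = s then c (u, v) else 0 := by
          simp only [Finset.sum_add_distrib]
      _ = (∑ v : Fin K, c (s, v)) + ∑ u : Fin K, c (u, s) := by
          congr 1
          · rw [Finset.sum_congr rfl fun u (_ : u ∈ univ) =>
              (show (∑ v : Fin K, if u = s then c (u, v) else 0)
                  = if u = s then ∑ v : Fin K, c (u, v) else 0 by split <;> simp)]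
            rw [Finset.sum_ite_eq' univ s (fun u => ∑ v : Fin K, c (u, v))]
            simp
          · exact Finset.sum_congr rfl fun u _ =>
              by rw [Finset.sum_ite_eq' univ s (fun v => c (u, v))]; simp
      _ = ∑ t : Fin K, (c (s, t) + c (t, s)) := Finset.sum_add_distrib.symm
      _ = ∑ t : Fin K, (b s t + if t = s then b s t else 0) :=
          Finset.sum_congr rfl fun t _ => point t
      _ = (∑ t : Fin K, b s t) + b s s := by
          rw [Finset.sum_add_distrib, Finset.sum_ite_eq' univ s (fun t => b s t)]
          simp
      _ = Nc s := by
          rw [← hbrow s, ← Finset.add_sum_erase univ (b s) (mem_univ s)]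
          ring
  -- (B) labelings membership from fiber counts
  have hLab : ∀ L : Fin (2 * I) → Fin K,
      (∀ q, (univ.filter fun j => norm2 (pairMap I K L j) = q).card = c q) →
        L ∈ labelings I K Nc := by
    intro L hL
    simp only [labelings, mem_filter, mem_univ, true_and]
    intro s
    have h1 : (univ.filter fun i => L i = s).card = ∑ i, (if L i = s then 1 else 0) :=
      Finset.card_filter _ _
    rw [h1, sum_split I (fun i => if L i = s then 1 else 0)]
    have h2 : ∀ j : Fin I,
        ((if L (ep1 j) = s then 1 else 0) + (if L (ep2 j) = s then 1 else 0) : ℕ)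
          = (if (norm2 (pairMap I K L j)).1 = s then 1 else 0)
            + (if (norm2 (pairMap I K L j)).2 = s then 1 else 0) := by
      intro j
      by_cases hle : L (ep1 j) ≤ L (ep2 j)
      · simp [pairMap, norm2, hle]
      · simp only [pairMap, norm2, hle, if_neg]
        exact add_comm _ _
    rw [Finset.sum_congr rfl fun j _ => h2 j]
    have h3 : (∑ j : Fin I, ((if (norm2 (pairMap I K L j)).1 = s then 1 else 0)
            + (if (norm2 (pairMap I K L j)).2 = s then 1 else 0) : ℕ))
        = ∑ q : Fin K × Fin K,
            c q * ((if q.1 = s then 1 else 0) + (if q.2 = s then 1 else 0)) := by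
      rw [← Finset.sum_fiberwise_of_maps_to
        (g := fun j : Fin I => norm2 (pairMap I K L j))
        (fun j (_ : j ∈ univ) => mem_univ (norm2 (pairMap I K L j)))
        (fun j => (if (norm2 (pairMap I K L j)).1 = s then 1 else 0)
            + (if (norm2 (pairMap I K L j)).2 = s then 1 else 0))]
      apply Finset.sum_congr rfl
      intro q _
      rw [Finset.sum_congr rfl (fun j hj => by
        rw [(mem_filter.mp hj).2])]
      rw [Finset.sum_const, hL q, smul_eq_mul]
    rw [h3, hW s]
  -- (C) event rewrite
  have hEv : ∀ L, ev L ↔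
      ∀ q, (univ.filter fun j => norm2 (pairMap I K L j) = q).card = c q := by
    intro L
    constructor
    · intro h q
      by_cases hq : q.1 ≤ q.2
      · have h2 := h q.1 q.2 hq
        rw [crossCount_eq L q.1 q.2 hq, Prod.mk.eta] at h2
        rw [hc]
        simpa [hq] using h2
      · rw [hc]
        simp only [hq, if_false]
        rw [Finset.card_eq_zero, Finset.filter_eq_empty_iff]
        intro j _ hcon
        exact hq (hcon ▸ norm2_le (pairMap I K L j))
    · intro h s t hst
      rw [crossCount_eq L s t hst]
      have h2 := h (s, t)
      rw [hc] at h2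
      simpa [hst] using h2
  -- (D) filter over labelings = filter over univ
  have hfilter : (labelings I K Nc).filter ev = univ.filter ev := by
    apply Finset.Subset.antisymm
    · exact Finset.filter_subset_filter ev (Finset.subset_univ _)
    · intro L hL
      rw [mem_filter] at hL ⊢
      exact ⟨hLab L ((hEv L).mp hL.2), hL.2⟩
  -- (E) sum of c
  have hcsum : ∑ q : Fin K × Fin K, c q = I := by
    have e1 : ∑ q : Fin K × Fin K, c q = ∑ u : Fin K, ∑ v : Fin K, if u ≤ v then b u v else 0 := by
      rw [Fintype.sum_prod_type]
    have e2 : ∑ q : Fin K × Fin K, c q = ∑ u : Fin K, ∑ v : Fin K, if v ≤ u then b u v else 0 := by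
      rw [e1, Finset.sum_comm]
      exact Finset.sum_congr rfl fun u _ => Finset.sum_congr rfl fun v _ => by rw [hbsymm]
    have hdouble : 2 * ∑ q : Fin K × Fin K, c q = ∑ s, Nc s := by
      calc 2 * ∑ q : Fin K × Fin K, c q
          = (∑ u : Fin K, ∑ v : Fin K, if u ≤ v then b u v else 0)
            + ∑ u : Fin K, ∑ v : Fin K, if v ≤ u then b u v else 0 := by
            rw [← e1, ← e2]; ring
        _ = ∑ u : Fin K, ∑ v : Fin K,
              ((if u ≤ v then b u v else 0) + (if v ≤ u then b u v else 0)) := by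
            simp only [← Finset.sum_add_distrib]
        _ = ∑ u : Fin K, ∑ v : Fin K, (b u v + if u = v then b u v else 0) := by
            apply Finset.sum_congr rfl; intro u _
            apply Finset.sum_congr rfl; intro v _
            by_cases h1 : u ≤ v <;> by_cases h2 : v ≤ u
            · have huv : u = v := le_antisymm h1 h2
              subst huv; simp
            · have hne : u ≠ v := fun h => h2 (le_of_eq h.symm)
              simp [h1, h2, hne]
            · have hne : u ≠ v := fun h => h1 (le_of_eq h)
              simp [h1, h2, hne]
            · exact absurd (le_total u v) (by simp [h1, h2])
        _ = (∑ u : Fin K, ∑ v : Fin K, b u v) + ∑ u : Fin K, b u u := by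
            simp only [Finset.sum_add_distrib]
            congr 1
            apply Finset.sum_congr rfl; intro u _
            rw [Finset.sum_ite_eq univ u (fun v => b u v)]
            simp
        _ = ∑ s, Nc s := by
            rw [show (∑ s, Nc s) = ∑ s, (b s s + ∑ t, b s t) from
              Finset.sum_congr rfl fun s _ => by
                rw [← hbrow s, ← Finset.add_sum_erase univ (b s) (mem_univ s)]; ring]
            rw [Finset.sum_add_distrib]
            ring
    rw [hNsum] at hdouble
    omega
  -- (F) product of factorials of c
  have hprodc : ∏ q : Fin K × Fin K, (c q).factorial
      = ∏ q ∈ univ.filter (fun q : Fin K × Fin K => q.1 ≤ q.2), ((b q.1 q.2).factorial) := by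
    rw [← Finset.prod_filter_mul_prod_filter_not univ (fun q : Fin K × Fin K => q.1 ≤ q.2)
      (fun q => (c q).factorial)]
    have hone : ∏ q ∈ univ.filter (fun q : Fin K × Fin K => ¬q.1 ≤ q.2), (c q).factorial = 1 := by
      apply Finset.prod_eq_one
      intro q hq
      rw [mem_filter] at hq
      rw [hc]
      simp [hq.2]
    rw [hone, mul_one]
    apply Finset.prod_congr rfl
    intro q hq
    rw [mem_filter] at hq
    rw [hc]
    simp [hq.2]
  -- (G) the H set and the counting
  set H : Finset (Fin I → Fin K × Fin K) :=
    univ.filter (fun h => ∀ q, (univ.filter fun j => h j = q).card = c q) with hH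
  have hD1 : (univ.filter ev).card
      = (univ.filter (fun g : Fin I → Fin K × Fin K =>
          ∀ q, (univ.filter fun j => norm2 (g j) = q).card = c q)).card := by
    apply Finset.card_bij (fun L _ => pairMap I K L)
    · intro L hL
      rw [mem_filter] at hL ⊢
      exact ⟨mem_univ _, fun q => ((hEv L).mp hL.2) q⟩
    · intro L _ L' _ h
      exact (pairMap_bijective I K).1 h
    · intro g hg
      obtain ⟨L, rfl⟩ := (pairMap_bijective I K).2 g
      rw [mem_filter] at hg
      exact ⟨L, mem_filter.mpr ⟨mem_univ _, (hEv L).mpr hg.2⟩, rfl⟩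
  have hD2 : (univ.filter (fun g : Fin I → Fin K × Fin K =>
        ∀ q, (univ.filter fun j => norm2 (g j) = q).card = c q)).card
      = ∑ h ∈ H, (univ.filter (fun g : Fin I → Fin K × Fin K =>
          (fun j => norm2 (g j)) = h)).card := by
    rw [Finset.card_eq_sum_card_fiberwise
      (f := fun g : Fin I → Fin K × Fin K => (fun j => norm2 (g j))) (t := H)
      (fun g hg => by
        rw [Finset.mem_coe, mem_filter] at hg
        rw [Finset.mem_coe, hH, mem_filter]
        exact ⟨mem_univ _, hg.2⟩)]
    apply Finset.sum_congr rfl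
    intro h hh
    congr 1
    ext g
    simp only [mem_filter, mem_univ, true_and]
    constructor
    · rintro ⟨_, h2⟩; exact h2
    · intro h2
      refine ⟨?_, h2⟩
      rw [hH, mem_filter] at hh
      intro q
      rw [show (univ.filter fun j => norm2 (g j) = q)
          = (univ.filter fun j => h j = q) from by
        apply Finset.filter_congr
        intro j _
        rw [← h2]]
      exact hh.2 q
  have hD3 : ∀ h ∈ H, (univ.filter (fun g : Fin I → Fin K × Fin K =>
      (fun j => norm2 (g j)) = h)).card = 2 ^ B := by
    intro h hh
    rw [hH, mem_filter] at hh
    have hnorm : ∀ j, (h j).1 ≤ (h j).2 := by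
      intro j
      by_contra hcon
      have h0 : c (h j) = 0 := by rw [hc]; simp [hcon]
      have h1 := hh.2 (h j)
      rw [h0, Finset.card_eq_zero, Finset.filter_eq_empty_iff] at h1
      exact h1 (mem_univ j) rfl
    have hpi : univ.filter (fun g : Fin I → Fin K × Fin K => (fun j => norm2 (g j)) = h)
        = Fintype.piFinset (fun j => univ.filter fun p => norm2 p = h j) := by
      ext g
      simp [Fintype.mem_piFinset, funext_iff]
    rw [hpi, Fintype.card_piFinset]
    rw [Finset.prod_congr rfl fun j (_ : j ∈ univ) => count_norm2_fiber (h j) (hnorm j)]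
    rw [Finset.prod_ite, Finset.prod_const, Finset.prod_const, one_pow, mul_one]
    congr 1
    rw [Finset.card_eq_sum_card_fiberwise (f := h)
      (t := univ.filter fun q : Fin K × Fin K => q.1 < q.2)
      (fun j hj => by
        rw [Finset.mem_coe, mem_filter] at hj ⊢
        exact ⟨mem_univ _, hj.2⟩)]
    rw [hB]
    apply Finset.sum_congr rfl
    intro q hq
    rw [mem_filter] at hq
    rw [show ((univ.filter (fun j => (h j).1 < (h j).2)).filter (fun j => h j = q))
        = univ.filter fun j => h j = q from by
      ext j
      simp only [mem_filter, mem_univ, true_and]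
      exact ⟨fun h2 => h2.2, fun h2 => ⟨h2 ▸ hq.2, h2⟩⟩]
    rw [hh.2 q, hc]
    simp [le_of_lt hq.2]
  have hD4 : H.card * ∏ q : Fin K × Fin K, (c q).factorial = Nat.factorial I := by
    have hkey := auxCardFiberFilterMul (α := Fin I) (β := Fin K × Fin K) c
      (by rw [Fintype.card_fin]; exact hcsum)
    rw [Fintype.card_fin] at hkey
    exact hkey
  -- (H) combine nat identities
  have hNev : ((labelings I K Nc).filter ev).card = H.card * 2 ^ B := by
    rw [hfilter, hD1, hD2, Finset.sum_congr rfl hD3, Finset.sum_const, smul_eq_mul]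
  have hNlab : (labelings I K Nc).card * ∏ s, (Nc s).factorial = (2 * I).factorial := by
    have hkey := auxCardFiberFilterMul (α := Fin (2 * I)) (β := Fin K) Nc
      (by rw [Fintype.card_fin]; exact hNsum)
    rw [Fintype.card_fin] at hkey
    unfold labelings
    convert hkey
  have hD4' : H.card * ∏ q ∈ univ.filter (fun q : Fin K × Fin K => q.1 ≤ q.2),
      ((b q.1 q.2).factorial) = Nat.factorial I := by
    rw [← hprodc]; exact hD4
  -- (I) real arithmetic
  have hfac1 : (0 : ℝ) < ∏ s, ((Nc s).factorial : ℝ) :=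
    Finset.prod_pos fun s _ => by exact_mod_cast (Nc s).factorial_pos
  have hfac2 : (0 : ℝ) < ∏ q ∈ univ.filter (fun q : Fin K × Fin K => q.1 ≤ q.2),
      ((b q.1 q.2).factorial : ℝ) :=
    Finset.prod_pos fun q _ => by exact_mod_cast (b q.1 q.2).factorial_pos
  have hfacN : (0 : ℝ) < ((2 * I).factorial : ℝ) := by exact_mod_cast (2 * I).factorial_pos
  have hlabR : ((labelings I K Nc).card : ℝ)
      = ((2 * I).factorial : ℝ) / ∏ s, ((Nc s).factorial : ℝ) := by
    rw [eq_div_iff (ne_of_gt hfac1)]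
    rw [← Nat.cast_prod, ← Nat.cast_mul, hNlab]
  have hHR : (H.card : ℝ) = (I.factorial : ℝ)
      / ∏ q ∈ univ.filter (fun q : Fin K × Fin K => q.1 ≤ q.2), ((b q.1 q.2).factorial : ℝ) := by
    rw [eq_div_iff (ne_of_gt hfac2)]
    rw [← Nat.cast_prod, ← Nat.cast_mul, hD4']
  have hlabne : ((labelings I K Nc).card : ℝ) ≠ 0 := by
    rw [hlabR]
    positivity
  unfold pr
  rw [Finset.filter_congr_decidable]
  rw [hNev]
  push_cast
  rw [hHR, hlabR]
  have h1 := ne_of_gt hfac1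
  have h2 := ne_of_gt hfac2
  have h3 := ne_of_gt hfacN
  field_simp


end Crossmatch
end

section
/- Assume K ≥ 3 and N ≥ 4. For a uniformly random labeling L and any pairwise distinct s₁, s₂, s₃ ∈ {1,…,K}, the covariance of the cross-counts satisfies Cov(a_{s₁s₂}, a_{s₁s₃}) = N_{s₁}(N_{s₁}−1)N_{s₂}N_{s₃}/((N−1)(N−3)) − N_{s₁}²N_{s₂}N_{s₃}/(N−1)². -/
open Finset Filter MeasureTheory ProbabilityTheory Topology

namespace Crossmatch

/-! ### Auxiliary lemmas -/

section Aux

variable {I K : ℕ} {Nc : Fin K → ℕ}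

/-- Labelings are closed under precomposition with a permutation. -/
lemma comp_perm_mem (σ : Equiv.Perm (Fin (2*I))) {L : Fin (2*I) → Fin K}
    (hL : L ∈ labelings I K Nc) : (L ∘ σ) ∈ labelings I K Nc := by
  simp only [labelings, mem_filter, mem_univ, true_and] at hL ⊢
  intro s
  rw [← hL s]
  apply Finset.card_bij (fun i _ => σ i)
  · intro a ha; simp only [mem_filter, mem_univ, true_and, Function.comp] at ha ⊢; exact ha
  · intro a _ b _ h; exact σ.injective h
  · intro b hb
    refine ⟨σ.symm b, ?_, by simp⟩
    simp only [mem_filter, mem_univ, true_and, Function.comp] at hb ⊢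
    simpa using hb

/-- A permutation carrying one embedding to another. -/
lemma exists_perm_comp {n m : ℕ} (f g : Fin m ↪ Fin n) :
    ∃ σ : Equiv.Perm (Fin n), ∀ i, σ (f i) = g i := by
  classical
  let e : {x // x ∈ Set.range f} ≃ {x // x ∈ Set.range g} :=
    (Equiv.ofInjective f f.injective).symm.trans (Equiv.ofInjective g g.injective)
  refine ⟨Equiv.extendSubtype e, fun i => ?_⟩
  rw [Equiv.extendSubtype_apply_of_mem e (f i) ⟨i, rfl⟩]
  show ((Equiv.ofInjective g g.injective)
    ((Equiv.ofInjective f f.injective).symm ⟨f i, ⟨i, rfl⟩⟩) : Fin n) = g i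
  have h1 : (Equiv.ofInjective f f.injective).symm ⟨f i, ⟨i, rfl⟩⟩ = i := by
    apply (Equiv.ofInjective f f.injective).injective
    simp [Equiv.ofInjective_apply]
  rw [h1]
  rfl

/-- The number of labelings whose values along an embedded tuple satisfy a given predicate
is independent of the embedding. -/
lemma count_const {m : ℕ} (f g : Fin m ↪ Fin (2*I)) (P : (Fin m → Fin K) → Prop)
    [∀ x : Fin m → Fin K, Decidable (P x)] :
    ((labelings I K Nc).filter fun L => P (fun i => L (f i))).card =
    ((labelings I K Nc).filter fun L => P (fun i => L (g i))).card := by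
  obtain ⟨σ, hσ⟩ := exists_perm_comp g f
  apply Finset.card_bij' (fun L _ => L ∘ σ) (fun L _ => L ∘ σ.symm)
  · intro L hL
    simp only [mem_filter] at hL ⊢
    refine ⟨comp_perm_mem σ hL.1, ?_⟩
    have : (fun i => (L ∘ σ) (g i)) = fun i => L (f i) := by
      funext i; simp [Function.comp, hσ i]
    rw [this]; exact hL.2
  · intro L hL
    simp only [mem_filter] at hL ⊢
    refine ⟨comp_perm_mem σ.symm hL.1, ?_⟩
    have : (fun i => (L ∘ σ.symm) (f i)) = fun i => L (g i) := by
      funext i; rw [← hσ i]; simp [Function.comp]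
    rw [this]; exact hL.2
  · intro L _; funext x; simp
  · intro L _; funext x; simp

lemma sum_swap_count {m : ℕ} (T : Finset (Fin (2*I) → Fin K))
    (P : (Fin m ↪ Fin (2*I)) → (Fin (2*I) → Fin K) → Prop)
    [∀ f L, Decidable (P f L)] :
    ∑ f : Fin m ↪ Fin (2*I), (T.filter (P f)).card
      = ∑ L ∈ T, (univ.filter fun f : Fin m ↪ Fin (2*I) => P f L).card := by
  simp only [Finset.card_filter]
  rw [Finset.sum_comm]

lemma card_emb {n m : ℕ} : (univ : Finset (Fin m ↪ Fin n)).card = n.descFactorial m := by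
  classical
  rw [Finset.card_univ, Fintype.card_embedding_eq, Fintype.card_fin, Fintype.card_fin]

lemma inj2 {α : Type*} {x y : α} (h : x ≠ y) : Function.Injective ![x, y] := by
  intro i j hij; fin_cases i <;> fin_cases j <;> simp_all

lemma inj4 {α : Type*} {x y z w : α} (hxy : x ≠ y) (hxz : x ≠ z) (hxw : x ≠ w)
    (hyz : y ≠ z) (hyw : y ≠ w) (hzw : z ≠ w) : Function.Injective ![x, y, z, w] := by
  intro i j hij; fin_cases i <;> fin_cases j <;> simp_all

lemma count_emb_two {n : ℕ} {L : Fin n → Fin K} {s t : Fin K} (hst : s ≠ t) :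
    (univ.filter fun f : Fin 2 ↪ Fin n => L (f 0) = s ∧ L (f 1) = t).card
      = (univ.filter fun i => L i = s).card * (univ.filter fun i => L i = t).card := by
  classical
  rw [← Finset.card_product]
  apply Finset.card_bij (fun f _ => (f 0, f 1))
  · intro f hf
    simp only [mem_filter, mem_univ, true_and] at hf
    simp [Finset.mem_product, hf.1, hf.2]
  · intro f hf g hg h
    ext i
    fin_cases i <;> simp_all [Prod.ext_iff]
  · intro b hb
    simp only [Finset.mem_product, mem_filter, mem_univ, true_and] at hb
    have hne : b.1 ≠ b.2 := fun h => hst (by rw [← hb.1, h, hb.2])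
    refine ⟨⟨![b.1, b.2], inj2 hne⟩, ?_, rfl⟩
    simp [hb.1, hb.2]

lemma count_emb_four {n : ℕ} {L : Fin n → Fin K} {s₁ s₂ s₃ : Fin K}
    (h12 : s₁ ≠ s₂) (h13 : s₁ ≠ s₃) (h23 : s₂ ≠ s₃) :
    (univ.filter fun f : Fin 4 ↪ Fin n =>
        L (f 0) = s₁ ∧ L (f 1) = s₂ ∧ L (f 2) = s₁ ∧ L (f 3) = s₃).card
      = ((univ.filter fun i => L i = s₁).card * (univ.filter fun i => L i = s₁).card
          - (univ.filter fun i => L i = s₁).card)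
        * ((univ.filter fun i => L i = s₂).card * (univ.filter fun i => L i = s₃).card) := by
  classical
  rw [← Finset.offDiag_card, ← Finset.card_product, ← Finset.card_product]
  apply Finset.card_bij (fun f _ => ((f 0, f 2), (f 1, f 3)))
  · intro f hf
    simp only [mem_filter, mem_univ, true_and] at hf
    obtain ⟨h0, h1, h2, h3⟩ := hf
    have h02 : f 0 ≠ f 2 := fun h => by
      have : (0 : Fin 4) = 2 := f.injective h
      simp at this
    simp [Finset.mem_product, Finset.mem_offDiag, h0, h1, h2, h3, h02]
  · intro f hf g hg h
    ext i
    fin_cases i <;> simp_all [Prod.ext_iff]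
  · rintro ⟨⟨x, z⟩, y, w⟩ hb
    simp only [Finset.mem_product, Finset.mem_offDiag, mem_filter, mem_univ, true_and] at hb
    obtain ⟨⟨hx, hz, hxz⟩, hy, hw⟩ := hb
    have hxy : x ≠ y := fun h => h12 (by rw [← hx, h, hy])
    have hxw : x ≠ w := fun h => h13 (by rw [← hx, h, hw])
    have hyz : y ≠ z := fun h => h12 (by rw [← hz, ← h, hy])
    have hyw : y ≠ w := fun h => h23 (by rw [← hy, h, hw])
    have hzw : z ≠ w := fun h => h13 (by rw [← hz, h, hw])
    refine ⟨⟨![x, y, z, w], inj4 hxy hxz hxw hyz hyw hzw⟩, ?_, rfl⟩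
    simp [hx, hy, hz, hw]

lemma labelings_nonempty (hNsum : ∑ s, Nc s = 2 * I) : (labelings I K Nc).Nonempty := by
  classical
  set M : Multiset (Fin K) := ∑ s : Fin K, Multiset.replicate (Nc s) s with hM
  have hcard : Multiset.card M = 2 * I := by
    rw [hM, ← hNsum]
    induction (univ : Finset (Fin K)) using Finset.cons_induction with
    | empty => simp
    | cons a s ha ih => simp [Finset.sum_cons, ih]
  have hcount : ∀ s, M.count s = Nc s := by
    intro s
    simp only [hM, Multiset.count_sum', Multiset.count_replicate]
    simp
  set l := M.toList with hl
  have hlen : l.length = 2 * I := by rw [hl, Multiset.length_toList, hcard]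
  refine ⟨fun i => l.get (Fin.cast hlen.symm i), ?_⟩
  simp only [labelings, mem_filter, mem_univ, true_and]
  intro s
  have hv : ∀ i : Fin (2*I), l.get (Fin.cast hlen.symm i)
      = List.Vector.get ⟨l, hlen⟩ i := by
    intro i; rfl
  calc (univ.filter fun i => l.get (Fin.cast hlen.symm i) = s).card
      = (univ.filter fun i => List.Vector.get ⟨l, hlen⟩ i = s).card := by
        apply congrArg
        apply Finset.filter_congr
        intro i _
        rw [hv i]
    _ = l.count s := Fin.card_filter_univ_eq_vector_get_eq_count s ⟨l, hlen⟩
    _ = Nc s := by rw [hl, ← Multiset.coe_count, Multiset.coe_toList, hcount]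

lemma covar_eq (h : (labelings I K Nc).Nonempty) (X Y : (Fin (2 * I) → Fin K) → ℝ) :
    covar I K Nc X Y
      = expct I K Nc (fun L => X L * Y L) - expct I K Nc X * expct I K Nc Y := by
  classical
  have hc : ((labelings I K Nc).card : ℝ) ≠ 0 := by
    simpa using Finset.card_ne_zero_of_mem h.choose_spec
  unfold covar expct
  set T := labelings I K Nc
  set a := (∑ L ∈ T, X L) / (T.card : ℝ) with ha
  set b := (∑ L ∈ T, Y L) / (T.card : ℝ) with hb
  have expand : ∑ L ∈ T, (X L - a) * (Y L - b)
      = (∑ L ∈ T, X L * Y L) - b * ∑ L ∈ T, X L - a * ∑ L ∈ T, Y L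
        + (T.card : ℝ) * (a * b) := by
    have : ∀ L, (X L - a) * (Y L - b) = X L * Y L - b * X L - a * Y L + a * b := by
      intro L; ring
    simp only [this]
    rw [Finset.sum_add_distrib, Finset.sum_sub_distrib, Finset.sum_sub_distrib,
      ← Finset.mul_sum, ← Finset.mul_sum, Finset.sum_const, nsmul_eq_mul]
  rw [expand, ha, hb]
  field_simp
  ring

lemma pair_eq_pair_iff' {α : Type*} [DecidableEq α] {a b s t : α} (hst : s ≠ t) :
    ({a, b} : Finset α) = {s, t} ↔ (a = s ∧ b = t) ∨ (a = t ∧ b = s) := by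
  constructor
  · intro h
    have ha : a ∈ ({s, t} : Finset α) := h ▸ (by simp : a ∈ ({a, b} : Finset α))
    have hb : b ∈ ({s, t} : Finset α) := h ▸ (by simp : b ∈ ({a, b} : Finset α))
    have hs : s ∈ ({a, b} : Finset α) := h.symm ▸ (by simp : s ∈ ({s, t} : Finset α))
    have ht : t ∈ ({a, b} : Finset α) := h.symm ▸ (by simp : t ∈ ({s, t} : Finset α))
    simp only [Finset.mem_insert, Finset.mem_singleton] at ha hb hs ht
    rcases ha with rfl | rfl <;> rcases hb with rfl | rfl <;> tauto
  · rintro (⟨rfl, rfl⟩ | ⟨rfl, rfl⟩)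
    · rfl
    · exact Finset.pair_comm a b

open Classical in
/-- Two-point pattern count: for any embedded pair and distinct labels. -/
lemma two_point (hNsum : ∑ s, Nc s = 2 * I) (f : Fin 2 ↪ Fin (2*I)) {s t : Fin K}
    (hst : s ≠ t) :
    ((labelings I K Nc).filter fun L => L (f 0) = s ∧ L (f 1) = t).card
        * ((2*I).descFactorial 2)
      = (labelings I K Nc).card * (Nc s * Nc t) := by
  classical
  set T := labelings I K Nc with hT
  have key : ∀ g : Fin 2 ↪ Fin (2*I),
      (T.filter fun L => L (g 0) = s ∧ L (g 1) = t).card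
        = (T.filter fun L => L (f 0) = s ∧ L (f 1) = t).card := by
    intro g
    exact count_const g f (fun v => v 0 = s ∧ v 1 = t)
  have hsum : ∑ g : Fin 2 ↪ Fin (2*I), (T.filter fun L => L (g 0) = s ∧ L (g 1) = t).card
      = T.card * (Nc s * Nc t) := by
    rw [sum_swap_count]
    rw [Finset.sum_congr rfl (fun L hL => ?_), Finset.sum_const, smul_eq_mul]
    have hLmem : ∀ u, (univ.filter fun i => L i = u).card = Nc u := by
      have := (Finset.mem_filter.mp hL).2
      simpa [hT, labelings, Finset.mem_filter] using
        (by simpa [hT, labelings, Finset.mem_filter] using hL : _)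
    rw [count_emb_two hst, hLmem s, hLmem t]
  calc (T.filter fun L => L (f 0) = s ∧ L (f 1) = t).card * ((2*I).descFactorial 2)
      = ∑ g : Fin 2 ↪ Fin (2*I),
          (T.filter fun L => L (g 0) = s ∧ L (g 1) = t).card := by
        rw [Finset.sum_congr rfl (fun g _ => key g), Finset.sum_const, smul_eq_mul,
          card_emb, mul_comm]
    _ = T.card * (Nc s * Nc t) := hsum

open Classical in
/-- Four-point pattern count. -/
lemma four_point (hNsum : ∑ s, Nc s = 2 * I) (f : Fin 4 ↪ Fin (2*I)) {s₁ s₂ s₃ : Fin K}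
    (h12 : s₁ ≠ s₂) (h13 : s₁ ≠ s₃) (h23 : s₂ ≠ s₃) :
    ((labelings I K Nc).filter fun L =>
        L (f 0) = s₁ ∧ L (f 1) = s₂ ∧ L (f 2) = s₁ ∧ L (f 3) = s₃).card
        * ((2*I).descFactorial 4)
      = (labelings I K Nc).card * ((Nc s₁ * Nc s₁ - Nc s₁) * (Nc s₂ * Nc s₃)) := by
  classical
  set T := labelings I K Nc with hT
  have key : ∀ g : Fin 4 ↪ Fin (2*I),
      (T.filter fun L => L (g 0) = s₁ ∧ L (g 1) = s₂ ∧ L (g 2) = s₁ ∧ L (g 3) = s₃).card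
        = (T.filter fun L =>
            L (f 0) = s₁ ∧ L (f 1) = s₂ ∧ L (f 2) = s₁ ∧ L (f 3) = s₃).card := by
    intro g
    exact count_const g f (fun v => v 0 = s₁ ∧ v 1 = s₂ ∧ v 2 = s₁ ∧ v 3 = s₃)
  have hsum : ∑ g : Fin 4 ↪ Fin (2*I),
      (T.filter fun L => L (g 0) = s₁ ∧ L (g 1) = s₂ ∧ L (g 2) = s₁ ∧ L (g 3) = s₃).card
      = T.card * ((Nc s₁ * Nc s₁ - Nc s₁) * (Nc s₂ * Nc s₃)) := by
    rw [sum_swap_count]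
    rw [Finset.sum_congr rfl (fun L hL => ?_), Finset.sum_const, smul_eq_mul]
    have hLmem : ∀ u, (univ.filter fun i => L i = u).card = Nc u := by
      have := (Finset.mem_filter.mp hL).2
      simpa [hT, labelings, Finset.mem_filter] using
        (by simpa [hT, labelings, Finset.mem_filter] using hL : _)
    rw [count_emb_four h12 h13 h23, hLmem s₁, hLmem s₂, hLmem s₃]
  calc (T.filter fun L =>
        L (f 0) = s₁ ∧ L (f 1) = s₂ ∧ L (f 2) = s₁ ∧ L (f 3) = s₃).card
        * ((2*I).descFactorial 4)
      = ∑ g : Fin 4 ↪ Fin (2*I),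
          (T.filter fun L =>
            L (g 0) = s₁ ∧ L (g 1) = s₂ ∧ L (g 2) = s₁ ∧ L (g 3) = s₃).card := by
        rw [Finset.sum_congr rfl (fun g _ => key g), Finset.sum_const, smul_eq_mul,
          card_emb, mul_comm]
    _ = _ := hsum

lemma ep_ne {j : Fin I} : ep1 j ≠ ep2 j := by
  simp [ep1, ep2, Fin.ext_iff]

lemma ep_ne4 {j k : Fin I} (hjk : j ≠ k) :
    ep1 j ≠ ep1 k ∧ ep1 j ≠ ep2 k ∧ ep2 j ≠ ep1 k ∧ ep2 j ≠ ep2 k := by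
  have : j.val ≠ k.val := fun h => hjk (Fin.ext h)
  refine ⟨?_, ?_, ?_, ?_⟩ <;> (simp [ep1, ep2, Fin.ext_iff]; omega)

/-- sum over labelings of a cross count, times the falling factorial. -/
lemma sum_cross (hNsum : ∑ s, Nc s = 2 * I) {s t : Fin K} (hst : s ≠ t) :
    (∑ L ∈ labelings I K Nc, crossCount I K L s t) * ((2*I).descFactorial 2)
      = I * ((labelings I K Nc).card * (2 * (Nc s * Nc t))) := by
  classical
  set T := labelings I K Nc with hT
  have step1 : ∑ L ∈ T, crossCount I K L s t
      = ∑ j : Fin I, (T.filter fun L =>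
          ({L (ep1 j), L (ep2 j)} : Finset (Fin K)) = ({s, t} : Finset (Fin K))).card := by
    simp only [crossCount, Finset.card_filter]
    rw [Finset.sum_comm]
  have step2 : ∀ j : Fin I, (T.filter fun L =>
      ({L (ep1 j), L (ep2 j)} : Finset (Fin K)) = ({s, t} : Finset (Fin K))).card
        * ((2*I).descFactorial 2)
      = T.card * (2 * (Nc s * Nc t)) := by
    intro j
    have hsplit : (T.filter fun L =>
        ({L (ep1 j), L (ep2 j)} : Finset (Fin K)) = ({s, t} : Finset (Fin K)))
        = (T.filter fun L => L (ep1 j) = s ∧ L (ep2 j) = t)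
          ∪ (T.filter fun L => L (ep1 j) = t ∧ L (ep2 j) = s) := by
      rw [← Finset.filter_or]
      apply Finset.filter_congr
      intro L _
      exact pair_eq_pair_iff' hst
    have hdisj : Disjoint (T.filter fun L => L (ep1 j) = s ∧ L (ep2 j) = t)
        (T.filter fun L => L (ep1 j) = t ∧ L (ep2 j) = s) := by
      rw [Finset.disjoint_left]
      intro L h1 h2
      simp only [Finset.mem_filter] at h1 h2
      exact hst (h1.2.1 ▸ h2.2.1 ▸ rfl)
    rw [hsplit, Finset.card_union_of_disjoint hdisj, add_mul]
    have e1 := two_point hNsum ⟨![ep1 j, ep2 j], inj2 ep_ne⟩ hst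
    have e2 := two_point hNsum ⟨![ep1 j, ep2 j], inj2 ep_ne⟩ hst.symm
    simp only [Function.Embedding.coeFn_mk, Matrix.cons_val_zero, Matrix.cons_val_one,
      Matrix.head_cons] at e1 e2
    rw [← hT] at e1 e2
    calc _ = T.card * (Nc s * Nc t) + T.card * (Nc t * Nc s) := by
          convert congrArg₂ HAdd.hAdd e1 e2 <;> rfl
      _ = _ := by ring
  rw [step1, Finset.sum_mul]
  rw [Finset.sum_congr rfl fun j _ => step2 j, Finset.sum_const, smul_eq_mul, Finset.card_univ,
    Fintype.card_fin]


lemma ite_mul_ite {p q : Prop} [Decidable p] [Decidable q] :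
    (if p then (1:ℕ) else 0) * (if q then (1:ℕ) else 0) = if p ∧ q then 1 else 0 := by
  split_ifs <;> simp_all

set_option maxHeartbeats 2000000 in
lemma sum_cross_mul (hNsum : ∑ s, Nc s = 2 * I) {s₁ s₂ s₃ : Fin K}
    (h12 : s₁ ≠ s₂) (h13 : s₁ ≠ s₃) (h23 : s₂ ≠ s₃) :
    (∑ L ∈ labelings I K Nc, crossCount I K L s₁ s₂ * crossCount I K L s₁ s₃)
        * ((2*I).descFactorial 4)
      = I * (I - 1)
        * ((labelings I K Nc).card * (4 * ((Nc s₁ * Nc s₁ - Nc s₁) * (Nc s₂ * Nc s₃)))) := by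
  classical
  set T := labelings I K Nc with hT
  set F : Fin I → Fin I → ℕ := fun j k => (T.filter fun L =>
      (({L (ep1 j), L (ep2 j)} : Finset (Fin K)) = ({s₁, s₂} : Finset (Fin K)))
      ∧ (({L (ep1 k), L (ep2 k)} : Finset (Fin K)) = ({s₁, s₃} : Finset (Fin K)))).card
    with hF
  have step1 : ∑ L ∈ T, crossCount I K L s₁ s₂ * crossCount I K L s₁ s₃
      = ∑ j : Fin I, ∑ k : Fin I, F j k := by
    simp only [crossCount, Finset.card_filter, Finset.sum_mul_sum, hF]
    rw [Finset.sum_comm]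
    apply Finset.sum_congr rfl
    intro j _
    rw [Finset.sum_comm]
    apply Finset.sum_congr rfl
    intro k _
    apply Finset.sum_congr rfl
    intro L _
    exact ite_mul_ite
  have hdiag : ∀ j, F j j = 0 := by
    intro j
    rw [hF]
    simp only [Finset.card_eq_zero, Finset.filter_eq_empty_iff]
    rintro L _ ⟨e1, e2⟩
    rw [e1] at e2
    rcases (pair_eq_pair_iff' h13).mp e2 with ⟨_, h⟩ | ⟨h, _⟩
    · exact absurd h h23
    · exact absurd h h13
  have step2 : ∀ j k : Fin I, j ≠ k → F j k * ((2*I).descFactorial 4)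
      = T.card * (4 * ((Nc s₁ * Nc s₁ - Nc s₁) * (Nc s₂ * Nc s₃))) := by
    intro j k hjk
    obtain ⟨d11, d12, d21, d22⟩ := ep_ne4 hjk
    set a := ep1 j; set b := ep2 j; set c := ep1 k; set d := ep2 k
    have hab : a ≠ b := ep_ne
    have hcd : c ≠ d := ep_ne
    have hsplit : (T.filter fun L =>
        (({L a, L b} : Finset (Fin K)) = ({s₁, s₂} : Finset (Fin K)))
        ∧ (({L c, L d} : Finset (Fin K)) = ({s₁, s₃} : Finset (Fin K))))
        = ((T.filter fun L => L a = s₁ ∧ L b = s₂ ∧ L c = s₁ ∧ L d = s₃)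
            ∪ (T.filter fun L => L a = s₁ ∧ L b = s₂ ∧ L d = s₁ ∧ L c = s₃))
          ∪ ((T.filter fun L => L b = s₁ ∧ L a = s₂ ∧ L c = s₁ ∧ L d = s₃)
            ∪ (T.filter fun L => L b = s₁ ∧ L a = s₂ ∧ L d = s₁ ∧ L c = s₃)) := by
      rw [← Finset.filter_or, ← Finset.filter_or, ← Finset.filter_or]
      apply Finset.filter_congr
      intro L _
      rw [pair_eq_pair_iff' h12, pair_eq_pair_iff' h13]
      tauto
    have hd1 : Disjoint (T.filter fun L => L a = s₁ ∧ L b = s₂ ∧ L c = s₁ ∧ L d = s₃)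
        (T.filter fun L => L a = s₁ ∧ L b = s₂ ∧ L d = s₁ ∧ L c = s₃) := by
      rw [Finset.disjoint_left]
      intro L m1 m2
      simp only [Finset.mem_filter] at m1 m2
      exact h13 (m1.2.2.2.1.symm.trans m2.2.2.2.2)
    have hd2 : Disjoint (T.filter fun L => L b = s₁ ∧ L a = s₂ ∧ L c = s₁ ∧ L d = s₃)
        (T.filter fun L => L b = s₁ ∧ L a = s₂ ∧ L d = s₁ ∧ L c = s₃) := by
      rw [Finset.disjoint_left]
      intro L m1 m2
      simp only [Finset.mem_filter] at m1 m2
      exact h13 (m1.2.2.2.1.symm.trans m2.2.2.2.2)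
    have hd3 : Disjoint
        ((T.filter fun L => L a = s₁ ∧ L b = s₂ ∧ L c = s₁ ∧ L d = s₃)
          ∪ (T.filter fun L => L a = s₁ ∧ L b = s₂ ∧ L d = s₁ ∧ L c = s₃))
        ((T.filter fun L => L b = s₁ ∧ L a = s₂ ∧ L c = s₁ ∧ L d = s₃)
          ∪ (T.filter fun L => L b = s₁ ∧ L a = s₂ ∧ L d = s₁ ∧ L c = s₃)) := by
      simp only [Finset.disjoint_union_left, Finset.disjoint_union_right]
      refine ⟨⟨?_, ?_⟩, ?_, ?_⟩ <;>
      · rw [Finset.disjoint_left]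
        intro L m1 m2
        simp only [Finset.mem_filter] at m1 m2
        exact h12 (m1.2.1.symm.trans m2.2.2.1)
    have e1 := four_point hNsum ⟨![a, b, c, d], inj4 hab d11 d12 d21 d22 hcd⟩ h12 h13 h23
    have e2 := four_point hNsum ⟨![a, b, d, c], inj4 hab d12 d11 d22 d21 hcd.symm⟩ h12 h13 h23
    have e3 := four_point hNsum ⟨![b, a, c, d], inj4 hab.symm d21 d22 d11 d12 hcd⟩ h12 h13 h23
    have e4 := four_point hNsum ⟨![b, a, d, c], inj4 hab.symm d22 d21 d12 d11 hcd.symm⟩ h12 h13 h23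
    simp only [Function.Embedding.coeFn_mk, Matrix.cons_val_zero, Matrix.cons_val_one,
      Matrix.head_cons, Matrix.cons_val_two, Matrix.tail_cons, Matrix.cons_val_three] at e1 e2 e3 e4
    rw [← hT] at e1 e2 e3 e4
    rw [hF]
    simp only
    rw [hsplit, Finset.card_union_of_disjoint hd3, Finset.card_union_of_disjoint hd1,
      Finset.card_union_of_disjoint hd2]
    rw [add_mul, add_mul, add_mul, e1, e2, e3, e4]
    ring
  -- assemble
  rw [step1, Finset.sum_mul]
  have inner : ∀ j : Fin I, (∑ k : Fin I, F j k) * ((2*I).descFactorial 4)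
      = (I - 1) * (T.card * (4 * ((Nc s₁ * Nc s₁ - Nc s₁) * (Nc s₂ * Nc s₃)))) := by
    intro j
    have : ∑ k : Fin I, F j k = ∑ k ∈ univ.erase j, F j k := by
      rw [← Finset.add_sum_erase _ _ (Finset.mem_univ j), hdiag j, zero_add]
    rw [this, Finset.sum_mul]
    rw [Finset.sum_congr rfl fun k hk => step2 j k (fun h => (Finset.mem_erase.mp hk).1 h.symm)]
    rw [Finset.sum_const, smul_eq_mul, Finset.card_erase_of_mem (Finset.mem_univ j),
      Finset.card_univ, Fintype.card_fin]
  rw [Finset.sum_congr rfl fun j _ => inner j, Finset.sum_const, smul_eq_mul, Finset.card_univ,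
    Fintype.card_fin]
  ring


end Aux

/-- null covariance of two cross-counts sharing one class, for pairwise
distinct `s₁, s₂, s₃` and `N ≥ 4`. -/
theorem stmt4 (K I : ℕ) (hK : 3 ≤ K) (hI : 1 ≤ I) (hN : 4 ≤ 2 * I)
    (Nc : Fin K → ℕ) (hNpos : ∀ s, 0 < Nc s) (hNsum : ∑ s, Nc s = 2 * I)
    (s₁ s₂ s₃ : Fin K) (h12 : s₁ ≠ s₂) (h13 : s₁ ≠ s₃) (h23 : s₂ ≠ s₃) :
    covar I K Nc (fun L => (crossCount I K L s₁ s₂ : ℝ))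
        (fun L => (crossCount I K L s₁ s₃ : ℝ))
      = (Nc s₁ : ℝ) * ((Nc s₁ : ℝ) - 1) * (Nc s₂ : ℝ) * (Nc s₃ : ℝ)
          / (((2 * I : ℝ) - 1) * ((2 * I : ℝ) - 3))
        - (Nc s₁ : ℝ) ^ 2 * (Nc s₂ : ℝ) * (Nc s₃ : ℝ) / ((2 * I : ℝ) - 1) ^ 2 := by
  classical
  have hne := labelings_nonempty hNsum
  have hI2 : 2 ≤ I := by omega
  have hTc : (0:ℝ) < ((labelings I K Nc).card : ℝ) := by
    exact_mod_cast Finset.card_pos.mpr hne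
  have hNr : (4:ℝ) ≤ 2 * (I:ℝ) := by exact_mod_cast hN
  have h0 : (2 * (I:ℝ)) ≠ 0 := by linarith
  have h1 : (2 * (I:ℝ)) - 1 ≠ 0 := by linarith
  have h2 : (2 * (I:ℝ)) - 2 ≠ 0 := by linarith
  have h3 : (2 * (I:ℝ)) - 3 ≠ 0 := by linarith
  have hd2 : (((2*I).descFactorial 2 : ℕ) : ℝ) = (2*(I:ℝ)) * (2*(I:ℝ) - 1) := by
    have e : (2*I).descFactorial 2 = (2*I - 1) * (2*I) := by
      simp [Nat.descFactorial]
    rw [e]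
    have h1' : (1:ℕ) ≤ 2*I := by omega
    push_cast [Nat.cast_sub h1']
    ring
  have hd4 : (((2*I).descFactorial 4 : ℕ) : ℝ)
      = (2*(I:ℝ)) * (2*(I:ℝ) - 1) * (2*(I:ℝ) - 2) * (2*(I:ℝ) - 3) := by
    have e : (2*I).descFactorial 4 = (2*I - 3) * ((2*I - 2) * ((2*I - 1) * (2*I))) := by
      simp [Nat.descFactorial]
    rw [e]
    have ha : (1:ℕ) ≤ 2*I := by omega
    have hb : (2:ℕ) ≤ 2*I := by omega
    have hc : (3:ℕ) ≤ 2*I := by omega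
    push_cast [Nat.cast_sub ha, Nat.cast_sub hb, Nat.cast_sub hc]
    ring
  -- real versions of the counting identities
  have B : (∑ L ∈ labelings I K Nc, (crossCount I K L s₁ s₂ : ℝ)) * ((2*(I:ℝ)) * (2*(I:ℝ) - 1))
      = (I:ℝ) * (((labelings I K Nc).card : ℝ) * (2 * ((Nc s₁ : ℝ) * (Nc s₂ : ℝ)))) := by
    rw [← hd2]
    exact_mod_cast sum_cross hNsum h12
  have C : (∑ L ∈ labelings I K Nc, (crossCount I K L s₁ s₃ : ℝ)) * ((2*(I:ℝ)) * (2*(I:ℝ) - 1))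
      = (I:ℝ) * (((labelings I K Nc).card : ℝ) * (2 * ((Nc s₁ : ℝ) * (Nc s₃ : ℝ)))) := by
    rw [← hd2]
    exact_mod_cast sum_cross hNsum h13
  have A : (∑ L ∈ labelings I K Nc, (crossCount I K L s₁ s₂ : ℝ) * (crossCount I K L s₁ s₃ : ℝ))
        * ((2*(I:ℝ)) * (2*(I:ℝ) - 1) * (2*(I:ℝ) - 2) * (2*(I:ℝ) - 3))
      = (I:ℝ) * ((I:ℝ) - 1)
        * (((labelings I K Nc).card : ℝ)
          * (4 * (((Nc s₁ : ℝ) * (Nc s₁ : ℝ) - (Nc s₁ : ℝ)) * ((Nc s₂ : ℝ) * (Nc s₃ : ℝ))))) := by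
    rw [← hd4]
    have hn1 : Nc s₁ ≤ Nc s₁ * Nc s₁ := Nat.le_mul_of_pos_left _ (hNpos s₁)
    have := sum_cross_mul hNsum h12 h13 h23 (I := I) (Nc := Nc)
    have hcast := congrArg (fun n : ℕ => (n : ℝ)) this
    push_cast [Nat.cast_sub hn1, Nat.cast_sub hI] at hcast
    convert hcast using 2 <;> push_cast <;> ring
  have hD2 : (2*(I:ℝ)) * (2*(I:ℝ) - 1) ≠ 0 := mul_ne_zero h0 h1
  have hD4 : (2*(I:ℝ)) * (2*(I:ℝ) - 1) * (2*(I:ℝ) - 2) * (2*(I:ℝ) - 3) ≠ 0 :=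
    mul_ne_zero (mul_ne_zero (mul_ne_zero h0 h1) h2) h3
  have hXY : ∑ L ∈ labelings I K Nc, (crossCount I K L s₁ s₂ : ℝ) * (crossCount I K L s₁ s₃ : ℝ)
      = (I:ℝ) * ((I:ℝ) - 1)
        * (((labelings I K Nc).card : ℝ)
          * (4 * (((Nc s₁ : ℝ) * (Nc s₁ : ℝ) - (Nc s₁ : ℝ)) * ((Nc s₂ : ℝ) * (Nc s₃ : ℝ)))))
        / ((2*(I:ℝ)) * (2*(I:ℝ) - 1) * (2*(I:ℝ) - 2) * (2*(I:ℝ) - 3)) := by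
    rw [eq_div_iff hD4]; exact A
  have hX : ∑ L ∈ labelings I K Nc, (crossCount I K L s₁ s₂ : ℝ)
      = (I:ℝ) * (((labelings I K Nc).card : ℝ) * (2 * ((Nc s₁ : ℝ) * (Nc s₂ : ℝ))))
        / ((2*(I:ℝ)) * (2*(I:ℝ) - 1)) := by
    rw [eq_div_iff hD2]; exact B
  have hY : ∑ L ∈ labelings I K Nc, (crossCount I K L s₁ s₃ : ℝ)
      = (I:ℝ) * (((labelings I K Nc).card : ℝ) * (2 * ((Nc s₁ : ℝ) * (Nc s₃ : ℝ))))
        / ((2*(I:ℝ)) * (2*(I:ℝ) - 1)) := by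
    rw [eq_div_iff hD2]; exact C
  rw [covar_eq hne]
  simp only [expct]
  rw [hXY, hX, hY]
  have hTc' : ((labelings I K Nc).card : ℝ) ≠ 0 := ne_of_gt hTc
  have hI1 : (I:ℝ) - 1 ≠ 0 := by
    have : (2:ℝ) ≤ I := by exact_mod_cast hI2
    linarith
  field_simp
  ring

end Crossmatch
end

section
/- Assume K ≥ 3 and N ≥ 4. For a uniformly random labeling L and any pairwise distinct s₁, s₂, s₃ ∈ {1,…,K}, the product moment of the cross-counts satisfies E[a_{s₁s₂}·a_{s₁s₃}] = N_{s₁}(N_{s₁}−1)N_{s₂}N_{s₃}/((N−1)(N−3)). -/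
open Finset Filter MeasureTheory ProbabilityTheory Topology

namespace Crossmatch

section Helpers
open Nat


def cnt {K : ℕ} {α : Type} [DecidableEq α] (T : Finset α) (v : α → Fin K) (s : Fin K) : ℕ :=
  (T.filter fun i => v i = s).card

lemma sum_cnt {K : ℕ} {α : Type} [DecidableEq α] (T : Finset α) (v : α → Fin K) :
    ∑ s, cnt T v s = T.card :=
  (Finset.card_eq_sum_card_fiberwise (fun i _ => Finset.mem_univ (v i))).symm

lemma cnt_insert {K : ℕ} {α : Type} [DecidableEq α] {T : Finset α} {i0 : α} (h : i0 ∉ T)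
    (v : α → Fin K) (s t : Fin K) :
    cnt (insert i0 T) (Function.update v i0 s) t = (if s = t then 1 else 0) + cnt T v t := by
  unfold cnt
  have hfT : T.filter (fun i => Function.update v i0 s i = t) = T.filter (fun i => v i = t) := by
    apply Finset.filter_congr; intro i hi
    rw [Function.update_of_ne (by rintro rfl; exact h hi)]
  rw [Finset.filter_insert, Function.update_self, hfT]
  split
  · rw [Finset.card_insert_of_notMem (fun hc => h (Finset.mem_of_mem_filter _ hc))]
    omega
  · simp

lemma key_aux {K : ℕ} {α : Type} [Fintype α] [DecidableEq α] (m : ℕ) :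
    ∀ (T : Finset α) (v : α → Fin K) (Nc : Fin K → ℕ),
      Tᶜ.card = m → (∀ s, cnt T v s ≤ Nc s) → (∑ s, Nc s = Fintype.card α) →
      ((univ.filter fun L : α → Fin K =>
          (∀ s, (univ.filter fun i => L i = s).card = Nc s) ∧ ∀ i ∈ T, L i = v i).card)
        * ∏ s, (Nc s - cnt T v s)! = (Fintype.card α - T.card)! := by
  induction m with
  | zero =>
    intro T v Nc hm hle hsum
    have hT : T = univ := by rwa [Finset.card_eq_zero, Finset.compl_eq_empty_iff] at hm
    subst hT
    have hcnt_eq : ∀ s, cnt univ v s = Nc s := by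
      have h1 : ∑ s, cnt univ v s = ∑ s, Nc s := by
        rw [sum_cnt, hsum, Finset.card_univ]
      intro s
      exact (Finset.sum_eq_sum_iff_of_le (fun i _ => hle i)).mp h1 s (mem_univ s)
    have hset : (univ.filter fun L : α → Fin K =>
        (∀ s, (univ.filter fun i => L i = s).card = Nc s) ∧ ∀ i ∈ univ, L i = v i) = {v} := by
      ext L
      simp only [Finset.mem_filter, Finset.mem_univ, true_and, Finset.mem_singleton]
      constructor
      · rintro ⟨-, hv⟩; exact funext fun i => hv i trivial
      · rintro rfl
        exact ⟨fun s => hcnt_eq s, fun i _ => rfl⟩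
    rw [hset]
    simp [hcnt_eq, Finset.card_univ]
  | succ m ih =>
    intro T v Nc hm hle hsum
    obtain ⟨i0, hi0⟩ : Tᶜ.Nonempty := by rw [← Finset.card_pos, hm]; omega
    have hi0T : i0 ∉ T := Finset.mem_compl.mp hi0
    have hTcard : T.card + (m + 1) = Fintype.card α := by
      have := Finset.card_compl T (α := α)
      have h2 := Finset.card_le_univ T
      omega
    set S := univ.filter fun L : α → Fin K =>
          (∀ s, (univ.filter fun i => L i = s).card = Nc s) ∧ ∀ i ∈ T, L i = v i with hS
    have hpiece : ∀ s : Fin K, (S.filter fun L => L i0 = s) =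
        univ.filter fun L : α → Fin K =>
          (∀ t, (univ.filter fun i => L i = t).card = Nc t) ∧
          ∀ i ∈ insert i0 T, L i = Function.update v i0 s i := by
      intro s; ext L
      simp only [hS, Finset.mem_filter, Finset.mem_univ, true_and, Finset.mem_insert, and_assoc]
      constructor
      · rintro ⟨hf, hv, hi⟩
        refine ⟨hf, ?_⟩
        rintro i (rfl | hiT)
        · rw [Function.update_self]; exact hi
        · rw [Function.update_of_ne (by rintro rfl; exact hi0T hiT)]
          exact hv i hiT
      · rintro ⟨hf, hv⟩
        refine ⟨hf, fun i hiT => ?_, ?_⟩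
        · rw [← Function.update_of_ne (show i ≠ i0 by rintro rfl; exact hi0T hiT) s v]
          exact hv i (Or.inr hiT)
        · have := hv i0 (Or.inl rfl)
          rwa [Function.update_self] at this
    -- per-piece value
    have hpieceval : ∀ s : Fin K,
        (S.filter fun L => L i0 = s).card * ∏ t, (Nc t - cnt T v t)! =
        (Nc s - cnt T v s) * (Fintype.card α - T.card - 1)! := by
      intro s
      by_cases hcase : cnt T v s < Nc s
      · have hcompl : (insert i0 T)ᶜ.card = m := by
          have h1 := Finset.card_compl (insert i0 T) (α := α)
          have h2 : (insert i0 T).card = T.card + 1 := Finset.card_insert_of_notMem hi0T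
          omega
        have hle' : ∀ t, cnt (insert i0 T) (Function.update v i0 s) t ≤ Nc t := by
          intro t
          rw [cnt_insert hi0T]
          split
          · next h => subst h; omega
          · simpa using hle t
        have h4 : Fintype.card α - (T.card + 1) = Fintype.card α - T.card - 1 := by omega
        have hprod : ∏ t, (Nc t - cnt T v t)! =
            (Nc s - cnt T v s) * ∏ t, (Nc t - cnt (insert i0 T) (Function.update v i0 s) t)! := by
          have hstep : ∏ t, (Nc t - cnt T v t)! =
              ∏ t, ((if t = s then (Nc s - cnt T v s) else 1) *
                (Nc t - cnt (insert i0 T) (Function.update v i0 s) t)!) := by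
            apply Finset.prod_congr rfl
            intro t _
            rw [cnt_insert hi0T]
            by_cases hts : t = s
            · subst hts
              rw [if_pos rfl, if_pos rfl]
              have h5 : Nc t - (1 + cnt T v t) = (Nc t - cnt T v t) - 1 := by omega
              rw [h5, ← Nat.mul_factorial_pred (by omega)]
            · rw [if_neg hts, if_neg (fun h => hts h.symm), one_mul, zero_add]
          rw [hstep, Finset.prod_mul_distrib, Finset.prod_ite_eq' univ s
            (fun _ => Nc s - cnt T v s), if_pos (mem_univ s)]
        have := ih (insert i0 T) (Function.update v i0 s) Nc hcompl hle' hsum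
        have hins : (insert i0 T).card = T.card + 1 := Finset.card_insert_of_notMem hi0T
        rw [hins, h4] at this
        rw [hpiece s, hprod, ← mul_assoc, mul_comm _ (Nc s - cnt T v s), mul_assoc, this]
      · -- cnt T v s = Nc s : piece is empty
        have hempty : (S.filter fun L => L i0 = s) = ∅ := by
          rw [Finset.eq_empty_iff_forall_notMem]
          intro L hL
          rw [Finset.mem_filter, hS, Finset.mem_filter] at hL
          obtain ⟨⟨-, hf, hv⟩, hi⟩ := hL
          have hsub : insert i0 (T.filter fun i => v i = s) ⊆ univ.filter fun i => L i = s := by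
            intro x hx
            rcases Finset.mem_insert.mp hx with rfl | hx
            · exact Finset.mem_filter.mpr ⟨mem_univ x, hi⟩
            · obtain ⟨hxT, hxv⟩ := Finset.mem_filter.mp hx
              exact Finset.mem_filter.mpr ⟨mem_univ x, (hv x hxT).trans hxv⟩
          have hc := Finset.card_le_card hsub
          rw [Finset.card_insert_of_notMem
            (fun hc' => hi0T (Finset.mem_of_mem_filter _ hc')), hf s] at hc
          have := hle s
          unfold cnt at *
          omega
        rw [hempty]
        have : Nc s - cnt T v s = 0 := by have := hle s; omega
        simp [this]
    have hfac : (Fintype.card α - T.card) * (Fintype.card α - T.card - 1)! = (Fintype.card α - T.card)! :=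
      Nat.mul_factorial_pred (by omega)
    have hsub : (∑ s : Fin K, (Nc s - cnt T v s)) = Fintype.card α - T.card := by
      rw [Finset.sum_tsub_distrib univ (fun s _ => hle s), hsum, sum_cnt]
    have hpart : S.card = ∑ s : Fin K, (S.filter fun L => L i0 = s).card :=
      Finset.card_eq_sum_card_fiberwise (fun L _ => Finset.mem_univ (L i0))
    calc S.card * ∏ t, (Nc t - cnt T v t)!
        = ∑ s : Fin K, (S.filter fun L => L i0 = s).card * ∏ t, (Nc t - cnt T v t)! := by
          rw [hpart, Finset.sum_mul]
      _ = ∑ s : Fin K, (Nc s - cnt T v s) * (Fintype.card α - T.card - 1)! := by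
          exact Finset.sum_congr rfl fun s _ => hpieceval s
      _ = (∑ s : Fin K, (Nc s - cnt T v s)) * (Fintype.card α - T.card - 1)! := by
          rw [Finset.sum_mul]
      _ = (Fintype.card α - T.card) * (Fintype.card α - T.card - 1)! := by rw [hsub]
      _ = (Fintype.card α - T.card)! := hfac


lemma key' {K : ℕ} {α : Type} [Fintype α] [DecidableEq α] (T : Finset α) (v : α → Fin K)
    (Nc : Fin K → ℕ) (hle : ∀ s, cnt T v s ≤ Nc s) (hsum : ∑ s, Nc s = Fintype.card α) :
    ((univ.filter fun L : α → Fin K =>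
        (∀ s, (univ.filter fun i => L i = s).card = Nc s) ∧ ∀ i ∈ T, L i = v i).card)
      * ∏ s, (Nc s - cnt T v s)! = (Fintype.card α - T.card)! :=
  key_aux Tᶜ.card T v Nc rfl hle hsum

lemma pair_eq_pair {K : ℕ} {x y s t : Fin K} (hst : s ≠ t) :
    ({x, y} : Finset (Fin K)) = {s, t} ↔ (x = s ∧ y = t) ∨ (x = t ∧ y = s) := by
  constructor
  · intro h
    have hx : x ∈ ({s, t} : Finset (Fin K)) := h ▸ Finset.mem_insert_self x {y}
    have hy : y ∈ ({s, t} : Finset (Fin K)) :=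
      h ▸ Finset.mem_insert_of_mem (Finset.mem_singleton_self y)
    have hs : s ∈ ({x, y} : Finset (Fin K)) := h.symm ▸ Finset.mem_insert_self s {t}
    have ht : t ∈ ({x, y} : Finset (Fin K)) :=
      h.symm ▸ Finset.mem_insert_of_mem (Finset.mem_singleton_self t)
    simp only [Finset.mem_insert, Finset.mem_singleton] at hx hy hs ht
    rcases hx with rfl | rfl <;> rcases hy with rfl | rfl <;> tauto
  · rintro (⟨rfl, rfl⟩ | ⟨rfl, rfl⟩)
    · rfl
    · exact Finset.pair_comm x y

lemma key4 {K : ℕ} {α : Type} [Fintype α] [DecidableEq α]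
    (Nc c : Fin K → ℕ) (a b c' d : α)
    (hab : a ≠ b) (hac : a ≠ c') (had : a ≠ d) (hbc : b ≠ c') (hbd : b ≠ d) (hcd : c' ≠ d)
    (x1 x2 x3 x4 : Fin K)
    (hc : ∀ s, ((if x1 = s then 1 else 0) + ((if x2 = s then 1 else 0)
      + ((if x3 = s then 1 else 0) + (if x4 = s then 1 else 0)))) = c s)
    (hle : ∀ s, c s ≤ Nc s) (hsum : ∑ s, Nc s = Fintype.card α) :
    (univ.filter fun L : α → Fin K =>
        (∀ s, (univ.filter fun i => L i = s).card = Nc s) ∧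
        (L a = x1 ∧ L b = x2 ∧ L c' = x3 ∧ L d = x4)).card * ∏ s, (Nc s - c s)!
      = (Fintype.card α - 4)! := by
  set T : Finset α := insert a (insert b (insert c' {d})) with hT
  set v : α → Fin K := fun i =>
    if i = a then x1 else if i = b then x2 else if i = c' then x3 else x4 with hv
  have va : v a = x1 := by simp [hv]
  have vb : v b = x2 := by simp [hv, Ne.symm hab]
  have vc : v c' = x3 := by simp [hv, Ne.symm hac, Ne.symm hbc]
  have vd : v d = x4 := by simp [hv, Ne.symm had, Ne.symm hbd, Ne.symm hcd]
  have hda : d ∉ ({} : Finset α) := Finset.notMem_empty d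
  have hmem_c : c' ∉ ({d} : Finset α) := by simp [hcd]
  have hmem_b : b ∉ (insert c' {d} : Finset α) := by simp [hbc, hbd]
  have hmem_a : a ∉ (insert b (insert c' {d}) : Finset α) := by simp [hab, hac, had]
  have hTcard : T.card = 4 := by
    rw [hT, Finset.card_insert_of_notMem hmem_a, Finset.card_insert_of_notMem hmem_b,
      Finset.card_insert_of_notMem hmem_c, Finset.card_singleton]
  have hcnt : ∀ s, cnt T v s = c s := by
    intro s
    rw [← hc s]
    unfold cnt
    rw [Finset.card_filter, hT, Finset.sum_insert hmem_a, Finset.sum_insert hmem_b,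
      Finset.sum_insert hmem_c, Finset.sum_singleton, va, vb, vc, vd]
  have hle' : ∀ s, cnt T v s ≤ Nc s := fun s => (hcnt s) ▸ hle s
  have hres := key' T v Nc hle' hsum
  have hprod : ∏ s, (Nc s - cnt T v s)! = ∏ s, (Nc s - c s)! :=
    Finset.prod_congr rfl fun s _ => by rw [hcnt s]
  have hpred : ∀ L : α → Fin K,
      (∀ i ∈ T, L i = v i) ↔ (L a = x1 ∧ L b = x2 ∧ L c' = x3 ∧ L d = x4) := by
    intro L
    rw [hT]
    constructor
    · intro h
      exact ⟨va ▸ h a (by simp), vb ▸ h b (by simp), vc ▸ h c' (by simp), vd ▸ h d (by simp)⟩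
    · rintro ⟨h1, h2, h3, h4⟩ i hi
      simp only [Finset.mem_insert, Finset.mem_singleton] at hi
      rcases hi with rfl | rfl | rfl | rfl
      · rw [va]; exact h1
      · rw [vb]; exact h2
      · rw [vc]; exact h3
      · rw [vd]; exact h4
  have hset : (univ.filter fun L : α → Fin K =>
        (∀ s, (univ.filter fun i => L i = s).card = Nc s) ∧ ∀ i ∈ T, L i = v i) =
      (univ.filter fun L : α → Fin K =>
        (∀ s, (univ.filter fun i => L i = s).card = Nc s) ∧
        (L a = x1 ∧ L b = x2 ∧ L c' = x3 ∧ L d = x4)) := by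
    apply Finset.filter_congr
    intro L _
    exact and_congr Iff.rfl (hpred L)
  rw [hset, hprod, hTcard] at hres
  exact hres


lemma crossCount_ne_zero {I K : ℕ} {L : Fin (2 * I) → Fin K} {s t : Fin K}
    (h : crossCount I K L s t ≠ 0) :
    ∃ j : Fin I, ({L (ep1 j), L (ep2 j)} : Finset (Fin K)) = ({s, t} : Finset (Fin K)) := by
  unfold crossCount at h
  obtain ⟨j, hj⟩ := Finset.card_pos.mp (Nat.pos_of_ne_zero h)
  exact ⟨j, (Finset.mem_filter.mp hj).2⟩

end Helpers

section Stmt6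
open Nat

set_option maxHeartbeats 2000000 in
/-- null product moment `E[a_{s₁s₂} a_{s₁s₃}]` for pairwise distinct
`s₁, s₂, s₃` and `N ≥ 4`. -/
theorem stmt6 (K I : ℕ) (hK : 3 ≤ K) (hI : 1 ≤ I) (hN : 4 ≤ 2 * I)
    (Nc : Fin K → ℕ) (hNpos : ∀ s, 0 < Nc s) (hNsum : ∑ s, Nc s = 2 * I)
    (s₁ s₂ s₃ : Fin K) (h12 : s₁ ≠ s₂) (h13 : s₁ ≠ s₃) (h23 : s₂ ≠ s₃) :
    expct I K Nc (fun L => (crossCount I K L s₁ s₂ : ℝ) * (crossCount I K L s₁ s₃ : ℝ))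
      = (Nc s₁ : ℝ) * ((Nc s₁ : ℝ) - 1) * (Nc s₂ : ℝ) * (Nc s₃ : ℝ)
          / (((2 * I : ℝ) - 1) * ((2 * I : ℝ) - 3)) := by
  have hcard2I : Fintype.card (Fin (2 * I)) = 2 * I := Fintype.card_fin _
  have hsum' : ∑ s, Nc s = Fintype.card (Fin (2 * I)) := by rw [hcard2I]; exact hNsum
  -- total count of labelings
  have htot : (labelings I K Nc).card * ∏ s, (Nc s)! = (2 * I)! := by
    have h := key' (α := Fin (2 * I)) ∅ (fun _ => s₁) Nc
      (by intro s; simp [cnt]) hsum'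
    simpa [cnt, hcard2I, labelings] using h
  have hTcpos : 0 < (labelings I K Nc).card := by
    rcases Nat.eq_zero_or_pos (labelings I K Nc).card with h | h
    · rw [h, zero_mul] at htot
      exact absurd htot.symm (Nat.factorial_pos _).ne'
    · exact h
  set Tc := (labelings I K Nc).card with hTc
  set A := ∑ L ∈ labelings I K Nc, crossCount I K L s₁ s₂ * crossCount I K L s₁ s₃ with hA
  have hExp : expct I K Nc
      (fun L => (crossCount I K L s₁ s₂ : ℝ) * (crossCount I K L s₁ s₃ : ℝ))
      = (A : ℝ) / (Tc : ℝ) := by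
    simp only [expct]
    congr 1
    rw [hA]
    push_cast
    rfl
  by_cases hcase1 : Nc s₁ < 2
  · -- degenerate case : Nc s₁ = 1
    have h1' : Nc s₁ = 1 := by have := hNpos s₁; omega
    have hAzero : A = 0 := by
      rw [hA]
      apply Finset.sum_eq_zero
      intro L hL
      rw [Nat.mul_eq_zero]
      by_contra hcon
      push_neg at hcon
      obtain ⟨hc1, hc2⟩ := hcon
      obtain ⟨j, hj⟩ := crossCount_ne_zero hc1
      obtain ⟨j', hj'⟩ := crossCount_ne_zero hc2
      have hjj' : j ≠ j' := by
        rintro rfl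
        rw [hj] at hj'
        rcases (pair_eq_pair h13).mp hj' with ⟨-, h⟩ | ⟨h, -⟩
        · exact h23 h
        · exact h13 h
      obtain ⟨p, hp, hpval⟩ : ∃ p, (p = ep1 j ∨ p = ep2 j) ∧ L p = s₁ := by
        rcases (pair_eq_pair h12).mp hj with ⟨u1, u2⟩ | ⟨u1, u2⟩
        · exact ⟨ep1 j, Or.inl rfl, u1⟩
        · exact ⟨ep2 j, Or.inr rfl, u2⟩
      obtain ⟨q, hq, hqval⟩ : ∃ q, (q = ep1 j' ∨ q = ep2 j') ∧ L q = s₁ := by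
        rcases (pair_eq_pair h13).mp hj' with ⟨u1, u2⟩ | ⟨u1, u2⟩
        · exact ⟨ep1 j', Or.inl rfl, u1⟩
        · exact ⟨ep2 j', Or.inr rfl, u2⟩
      have hjv : j.val ≠ j'.val := fun h => hjj' (Fin.ext h)
      have hpq : p ≠ q := by
        rcases hp with rfl | rfl <;> rcases hq with rfl | rfl <;>
          (intro h; apply hjv; simp only [ep1, ep2, Fin.mk.injEq] at h; omega)
      have hLf := hL
      unfold labelings at hLf
      have hfib := (Finset.mem_filter.mp hLf).2 s₁
      have hsub : ({p, q} : Finset (Fin (2 * I))) ⊆ univ.filter fun i => L i = s₁ := by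
        intro x hx
        rcases Finset.mem_insert.mp hx with rfl | hx
        · exact Finset.mem_filter.mpr ⟨Finset.mem_univ _, hpval⟩
        · rw [Finset.mem_singleton] at hx
          subst hx
          exact Finset.mem_filter.mpr ⟨Finset.mem_univ _, hqval⟩
      have hcard := Finset.card_le_card hsub
      rw [hfib, Finset.card_insert_of_notMem (by simp [hpq]),
        Finset.card_singleton] at hcard
      omega
    rw [hExp, hAzero, h1']
    norm_num
  -- main case : Nc s₁ ≥ 2
  push_neg at hcase1
  set c : Fin K → ℕ := fun s => (if s₁ = s then 1 else 0) +
    ((if s₂ = s then 1 else 0) + ((if s₁ = s then 1 else 0) + (if s₃ = s then 1 else 0)))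
    with hcdef
  have hc1 : c s₁ = 2 := by simp [hcdef, Ne.symm h12, Ne.symm h13]
  have hc2 : c s₂ = 1 := by simp [hcdef, h12, Ne.symm h23]
  have hc3 : c s₃ = 1 := by simp [hcdef, h13, h23]
  have hcother : ∀ s, s ≠ s₁ → s ≠ s₂ → s ≠ s₃ → c s = 0 := by
    intro s hs1 hs2 hs3
    simp [hcdef, Ne.symm hs1, Ne.symm hs2, Ne.symm hs3]
  have hle : ∀ s, c s ≤ Nc s := by
    intro s
    by_cases e1 : s = s₁
    · subst e1; rw [hc1]; exact hcase1
    by_cases e2 : s = s₂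
    · subst e2; rw [hc2]; exact hNpos _
    by_cases e3 : s = s₃
    · subst e3; rw [hc3]; exact hNpos _
    rw [hcother s e1 e2 e3]; exact Nat.zero_le _
  set D := ∏ s, (Nc s - c s)! with hD
  have hDpos : 0 < D := Finset.prod_pos fun s _ => Nat.factorial_pos _
  -- counting for a fixed pair (j, j') with j ≠ j'
  have hstep : ∀ j j' : Fin I, j ≠ j' →
      ((labelings I K Nc).filter fun L =>
        (({L (ep1 j), L (ep2 j)} : Finset (Fin K)) = ({s₁, s₂} : Finset (Fin K))) ∧
        (({L (ep1 j'), L (ep2 j')} : Finset (Fin K)) = ({s₁, s₃} : Finset (Fin K)))).card * D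
      = 4 * (2 * I - 4)! := by
    intro j j' hjj'
    have hjv : j.val ≠ j'.val := fun h => hjj' (Fin.ext h)
    have d1 : ep1 j ≠ ep2 j := by simp only [ep1, ep2, ne_eq, Fin.mk.injEq]; omega
    have d2 : ep1 j ≠ ep1 j' := by simp only [ep1, ne_eq, Fin.mk.injEq]; omega
    have d3 : ep1 j ≠ ep2 j' := by simp only [ep1, ep2, ne_eq, Fin.mk.injEq]; omega
    have d4 : ep2 j ≠ ep1 j' := by simp only [ep1, ep2, ne_eq, Fin.mk.injEq]; omega
    have d5 : ep2 j ≠ ep2 j' := by simp only [ep2, ne_eq, Fin.mk.injEq]; omega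
    have d6 : ep1 j' ≠ ep2 j' := by simp only [ep1, ep2, ne_eq, Fin.mk.injEq]; omega
    have hfilfil : ∀ (x1 x2 x3 x4 : Fin K),
        ((labelings I K Nc).filter fun L =>
          L (ep1 j) = x1 ∧ L (ep2 j) = x2 ∧ L (ep1 j') = x3 ∧ L (ep2 j') = x4) =
        (univ.filter fun L : Fin (2 * I) → Fin K =>
          (∀ s, (univ.filter fun i => L i = s).card = Nc s) ∧
          (L (ep1 j) = x1 ∧ L (ep2 j) = x2 ∧ L (ep1 j') = x3 ∧ L (ep2 j') = x4)) := by
      intro x1 x2 x3 x4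
      unfold labelings
      rw [Finset.filter_filter]
    have k1 := key4 Nc c (ep1 j) (ep2 j) (ep1 j') (ep2 j') d1 d2 d3 d4 d5 d6
      s₁ s₂ s₁ s₃ (fun s => rfl) hle hsum'
    have k2 := key4 Nc c (ep1 j) (ep2 j) (ep1 j') (ep2 j') d1 d2 d3 d4 d5 d6
      s₁ s₂ s₃ s₁ (fun s => by simp only [hcdef]; ring) hle hsum'
    have k3 := key4 Nc c (ep1 j) (ep2 j) (ep1 j') (ep2 j') d1 d2 d3 d4 d5 d6
      s₂ s₁ s₁ s₃ (fun s => by simp only [hcdef]; ring) hle hsum'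
    have k4 := key4 Nc c (ep1 j) (ep2 j) (ep1 j') (ep2 j') d1 d2 d3 d4 d5 d6
      s₂ s₁ s₃ s₁ (fun s => by simp only [hcdef]; ring) hle hsum'
    rw [← hfilfil s₁ s₂ s₁ s₃] at k1
    rw [← hfilfil s₁ s₂ s₃ s₁] at k2
    rw [← hfilfil s₂ s₁ s₁ s₃] at k3
    rw [← hfilfil s₂ s₁ s₃ s₁] at k4
    rw [hcard2I] at k1 k2 k3 k4
    have hunion : ((labelings I K Nc).filter fun L =>
        (({L (ep1 j), L (ep2 j)} : Finset (Fin K)) = ({s₁, s₂} : Finset (Fin K))) ∧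
        (({L (ep1 j'), L (ep2 j')} : Finset (Fin K)) = ({s₁, s₃} : Finset (Fin K)))) =
        (((labelings I K Nc).filter fun L =>
            L (ep1 j) = s₁ ∧ L (ep2 j) = s₂ ∧ L (ep1 j') = s₁ ∧ L (ep2 j') = s₃) ∪
         ((labelings I K Nc).filter fun L =>
            L (ep1 j) = s₁ ∧ L (ep2 j) = s₂ ∧ L (ep1 j') = s₃ ∧ L (ep2 j') = s₁)) ∪
        (((labelings I K Nc).filter fun L =>
            L (ep1 j) = s₂ ∧ L (ep2 j) = s₁ ∧ L (ep1 j') = s₁ ∧ L (ep2 j') = s₃) ∪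
         ((labelings I K Nc).filter fun L =>
            L (ep1 j) = s₂ ∧ L (ep2 j) = s₁ ∧ L (ep1 j') = s₃ ∧ L (ep2 j') = s₁)) := by
      ext L
      simp only [Finset.mem_filter, Finset.mem_union, ← and_or_left]
      apply and_congr Iff.rfl
      constructor
      · rintro ⟨he1, he2⟩
        rcases (pair_eq_pair h12).mp he1 with ⟨u1, u2⟩ | ⟨u1, u2⟩ <;>
          rcases (pair_eq_pair h13).mp he2 with ⟨w1, w2⟩ | ⟨w1, w2⟩ <;> tauto
      · intro h
        rcases h with (⟨u1, u2, w1, w2⟩ | ⟨u1, u2, w1, w2⟩) |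
          (⟨u1, u2, w1, w2⟩ | ⟨u1, u2, w1, w2⟩) <;>
          exact ⟨(pair_eq_pair h12).mpr (by tauto), (pair_eq_pair h13).mpr (by tauto)⟩
    have hd12 : Disjoint
        ((labelings I K Nc).filter fun L =>
          L (ep1 j) = s₁ ∧ L (ep2 j) = s₂ ∧ L (ep1 j') = s₁ ∧ L (ep2 j') = s₃)
        ((labelings I K Nc).filter fun L =>
          L (ep1 j) = s₁ ∧ L (ep2 j) = s₂ ∧ L (ep1 j') = s₃ ∧ L (ep2 j') = s₁) :=
      Finset.disjoint_filter.mpr fun L _ h hh => h13 (h.2.2.1 ▸ hh.2.2.1 ▸ rfl)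
    have hd34 : Disjoint
        ((labelings I K Nc).filter fun L =>
          L (ep1 j) = s₂ ∧ L (ep2 j) = s₁ ∧ L (ep1 j') = s₁ ∧ L (ep2 j') = s₃)
        ((labelings I K Nc).filter fun L =>
          L (ep1 j) = s₂ ∧ L (ep2 j) = s₁ ∧ L (ep1 j') = s₃ ∧ L (ep2 j') = s₁) :=
      Finset.disjoint_filter.mpr fun L _ h hh => h13 (h.2.2.1 ▸ hh.2.2.1 ▸ rfl)
    have hdbig : Disjoint
        (((labelings I K Nc).filter fun L =>
            L (ep1 j) = s₁ ∧ L (ep2 j) = s₂ ∧ L (ep1 j') = s₁ ∧ L (ep2 j') = s₃) ∪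
         ((labelings I K Nc).filter fun L =>
            L (ep1 j) = s₁ ∧ L (ep2 j) = s₂ ∧ L (ep1 j') = s₃ ∧ L (ep2 j') = s₁))
        (((labelings I K Nc).filter fun L =>
            L (ep1 j) = s₂ ∧ L (ep2 j) = s₁ ∧ L (ep1 j') = s₁ ∧ L (ep2 j') = s₃) ∪
         ((labelings I K Nc).filter fun L =>
            L (ep1 j) = s₂ ∧ L (ep2 j) = s₁ ∧ L (ep1 j') = s₃ ∧ L (ep2 j') = s₁)) := by
      simp only [Finset.disjoint_union_left, Finset.disjoint_union_right]
      refine ⟨⟨?_, ?_⟩, ?_, ?_⟩ <;>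
        exact Finset.disjoint_filter.mpr fun L _ h hh => h12 (h.1.symm.trans hh.1)
    rw [hunion, Finset.card_union_of_disjoint hdbig,
      Finset.card_union_of_disjoint hd12, Finset.card_union_of_disjoint hd34,
      hD, add_mul, add_mul, add_mul, k1, k2, k3, k4]
    ring
  -- diagonal terms vanish
  have hzero : ∀ j : Fin I,
      ((labelings I K Nc).filter fun L =>
        (({L (ep1 j), L (ep2 j)} : Finset (Fin K)) = ({s₁, s₂} : Finset (Fin K))) ∧
        (({L (ep1 j), L (ep2 j)} : Finset (Fin K)) = ({s₁, s₃} : Finset (Fin K)))).card = 0 := by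
    intro j
    rw [Finset.card_eq_zero, Finset.filter_eq_empty_iff]
    rintro L - ⟨he1, he2⟩
    rw [he1] at he2
    rcases (pair_eq_pair h13).mp he2 with ⟨-, h⟩ | ⟨h, -⟩
    · exact h23 h
    · exact h13 h
  -- double-sum expression of A
  have hA2 : A = ∑ j : Fin I, ∑ j' : Fin I,
      ((labelings I K Nc).filter fun L =>
        (({L (ep1 j), L (ep2 j)} : Finset (Fin K)) = ({s₁, s₂} : Finset (Fin K))) ∧
        (({L (ep1 j'), L (ep2 j')} : Finset (Fin K)) = ({s₁, s₃} : Finset (Fin K)))).card := by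
    rw [hA]
    simp only [crossCount]
    calc ∑ L ∈ labelings I K Nc,
          (univ.filter fun j : Fin I =>
            ({L (ep1 j), L (ep2 j)} : Finset (Fin K)) = ({s₁, s₂} : Finset (Fin K))).card *
          (univ.filter fun j : Fin I =>
            ({L (ep1 j), L (ep2 j)} : Finset (Fin K)) = ({s₁, s₃} : Finset (Fin K))).card
        = ∑ L ∈ labelings I K Nc, ∑ j : Fin I, ∑ j' : Fin I,
            (if ({L (ep1 j), L (ep2 j)} : Finset (Fin K)) = ({s₁, s₂} : Finset (Fin K))
              then 1 else 0) *
            (if ({L (ep1 j'), L (ep2 j')} : Finset (Fin K)) = ({s₁, s₃} : Finset (Fin K))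
              then 1 else 0) := by
          refine Finset.sum_congr rfl fun L _ => ?_
          rw [Finset.card_filter, Finset.card_filter, Finset.sum_mul_sum]
      _ = ∑ j : Fin I, ∑ j' : Fin I, ∑ L ∈ labelings I K Nc,
            (if ({L (ep1 j), L (ep2 j)} : Finset (Fin K)) = ({s₁, s₂} : Finset (Fin K))
              then 1 else 0) *
            (if ({L (ep1 j'), L (ep2 j')} : Finset (Fin K)) = ({s₁, s₃} : Finset (Fin K))
              then 1 else 0) := by
          rw [Finset.sum_comm]
          exact Finset.sum_congr rfl fun j _ => Finset.sum_comm
      _ = ∑ j : Fin I, ∑ j' : Fin I,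
            ((labelings I K Nc).filter fun L =>
              (({L (ep1 j), L (ep2 j)} : Finset (Fin K)) = ({s₁, s₂} : Finset (Fin K))) ∧
              (({L (ep1 j'), L (ep2 j')} : Finset (Fin K)) =
                ({s₁, s₃} : Finset (Fin K)))).card := by
          refine Finset.sum_congr rfl fun j _ => Finset.sum_congr rfl fun j' _ => ?_
          rw [Finset.card_filter]
          refine Finset.sum_congr rfl fun L _ => ?_
          by_cases he1 : ({L (ep1 j), L (ep2 j)} : Finset (Fin K)) =
              ({s₁, s₂} : Finset (Fin K)) <;>
            by_cases he2 : ({L (ep1 j'), L (ep2 j')} : Finset (Fin K)) =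
              ({s₁, s₃} : Finset (Fin K)) <;>
            simp [he1, he2]
  have hAD : A * D = I * ((I - 1) * (4 * (2 * I - 4)!)) := by
    rw [hA2, Finset.sum_mul]
    have hinner : ∀ j : Fin I, (∑ j' : Fin I,
        ((labelings I K Nc).filter fun L =>
          (({L (ep1 j), L (ep2 j)} : Finset (Fin K)) = ({s₁, s₂} : Finset (Fin K))) ∧
          (({L (ep1 j'), L (ep2 j')} : Finset (Fin K)) =
            ({s₁, s₃} : Finset (Fin K)))).card) * D
        = (I - 1) * (4 * (2 * I - 4)!) := by
      intro j
      rw [Finset.sum_mul, ← Finset.add_sum_erase _ _ (Finset.mem_univ j), hzero j, zero_mul,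
        zero_add, Finset.sum_congr rfl
          (fun j' hj' => hstep j j' (Ne.symm (Finset.mem_erase.mp hj').1)),
        Finset.sum_const, Finset.card_erase_of_mem (Finset.mem_univ j), Finset.card_univ,
        Fintype.card_fin, smul_eq_mul]
    rw [Finset.sum_congr rfl fun j _ => hinner j, Finset.sum_const, Finset.card_univ,
      Fintype.card_fin, smul_eq_mul]
  clear hA2
  -- factorial identity
  have hbig : I * ((I - 1) * (4 * (2 * I - 4)!)) * ((2 * I - 1) * (2 * I - 3)) = (2 * I)! := by
    obtain ⟨n, hn⟩ : ∃ n, 2 * I = n + 4 := ⟨2 * I - 4, by omega⟩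
    have e1 : 2 * I - 1 = n + 3 := by omega
    have e2 : 2 * I - 3 = n + 1 := by omega
    have e3 : 2 * I - 4 = n := by omega
    have e4 : 2 * (I - 1) = n + 2 := by omega
    have hfac : (2 * I)! = (n + 4) * ((n + 3) * ((n + 2) * ((n + 1) * n !))) := by
      rw [hn, show n + 4 = (n + 3) + 1 from rfl, Nat.factorial_succ,
        show n + 3 = (n + 2) + 1 from rfl, Nat.factorial_succ,
        show n + 2 = (n + 1) + 1 from rfl, Nat.factorial_succ, Nat.factorial_succ]
    calc I * ((I - 1) * (4 * (2 * I - 4)!)) * ((2 * I - 1) * (2 * I - 3))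
        = (2 * I) * (2 * (I - 1)) * (2 * I - 4)! * ((2 * I - 1) * (2 * I - 3)) := by ring
      _ = (n + 4) * (n + 2) * n ! * ((n + 3) * (n + 1)) := by rw [e1, e2, e3, e4, hn]
      _ = (n + 4) * ((n + 3) * ((n + 2) * ((n + 1) * n !))) := by ring
      _ = (2 * I)! := hfac.symm
  -- product of factorials identity
  have hPD : ∏ s, (Nc s)! = (Nc s₁ * (Nc s₁ - 1) * (Nc s₂ * Nc s₃)) * D := by
    set g : Fin K → ℕ := fun s => if s = s₁ then Nc s₁ * (Nc s₁ - 1)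
      else if s = s₂ then Nc s₂ else if s = s₃ then Nc s₃ else 1 with hg
    have hsplit : ∀ s, (Nc s)! = g s * (Nc s - c s)! := by
      intro s
      by_cases e1 : s = s₁
      · subst e1
        rw [hg]
        simp only [if_pos rfl]
        rw [hc1]
        calc (Nc s)! = Nc s * (Nc s - 1)! := (Nat.mul_factorial_pred (by omega)).symm
          _ = Nc s * ((Nc s - 1) * (Nc s - 1 - 1)!) := by
              conv_rhs => rw [Nat.mul_factorial_pred (by omega)]
          _ = Nc s * (Nc s - 1) * (Nc s - 2)! := by
              rw [show Nc s - 1 - 1 = Nc s - 2 by omega]; ring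
      by_cases e2 : s = s₂
      · subst e2
        rw [hg]
        simp only [if_neg e1, if_pos rfl]
        rw [hc2]
        exact (Nat.mul_factorial_pred (hNpos _).ne').symm
      by_cases e3 : s = s₃
      · subst e3
        rw [hg]
        simp only [if_neg e1, if_neg e2, if_pos rfl]
        rw [hc3]
        exact (Nat.mul_factorial_pred (hNpos _).ne').symm
      · rw [hg]
        simp only [if_neg e1, if_neg e2, if_neg e3]
        rw [hcother s e1 e2 e3, one_mul, Nat.sub_zero]
    have hout : ∀ x ∈ (univ : Finset (Fin K)), x ∉ ({s₁, s₂, s₃} : Finset (Fin K)) → g x = 1 := by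
      intro x _ hx
      simp only [Finset.mem_insert, Finset.mem_singleton, not_or] at hx
      rw [hg]
      simp only [if_neg hx.1, if_neg hx.2.1, if_neg hx.2.2]
    have hprodg : ∏ s, g s = Nc s₁ * (Nc s₁ - 1) * (Nc s₂ * Nc s₃) := by
      rw [← Finset.prod_subset (Finset.subset_univ ({s₁, s₂, s₃} : Finset (Fin K))) hout,
        Finset.prod_insert (by simp [h12, h13]), Finset.prod_insert (by simp [h23]),
        Finset.prod_singleton, hg]
      simp only [if_pos rfl, if_neg (Ne.symm h12), if_neg (Ne.symm h13), if_neg (Ne.symm h23),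
        if_neg h23, if_true, eq_self_iff_true]
    calc ∏ s, (Nc s)! = ∏ s, (g s * (Nc s - c s)!) :=
          Finset.prod_congr rfl fun s _ => hsplit s
      _ = (∏ s, g s) * D := by rw [Finset.prod_mul_distrib]
      _ = (Nc s₁ * (Nc s₁ - 1) * (Nc s₂ * Nc s₃)) * D := by rw [hprodg]
  -- key natural-number identity
  have hkey : A * ((2 * I - 1) * (2 * I - 3)) = Tc * (Nc s₁ * (Nc s₁ - 1) * (Nc s₂ * Nc s₃)) := by
    apply Nat.eq_of_mul_eq_mul_right hDpos
    calc A * ((2 * I - 1) * (2 * I - 3)) * D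
        = (A * D) * ((2 * I - 1) * (2 * I - 3)) := by ring
      _ = I * ((I - 1) * (4 * (2 * I - 4)!)) * ((2 * I - 1) * (2 * I - 3)) := by rw [hAD]
      _ = (2 * I)! := hbig
      _ = Tc * ∏ s, (Nc s)! := htot.symm
      _ = Tc * (Nc s₁ * (Nc s₁ - 1) * (Nc s₂ * Nc s₃)) * D := by rw [hPD]; ring
  -- conclude over the reals
  rw [hExp]
  have hTcne : (Tc : ℝ) ≠ 0 := Nat.cast_ne_zero.mpr hTcpos.ne'
  have hIcast : (4 : ℝ) ≤ 2 * (I : ℝ) := by exact_mod_cast hN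
  have hden : (((2 * I : ℝ)) - 1) * (((2 * I : ℝ)) - 3) ≠ 0 := by
    apply mul_ne_zero <;> nlinarith
  rw [div_eq_div_iff hTcne hden]
  have hcast := congrArg (fun k : ℕ => (k : ℝ)) hkey
  push_cast [Nat.cast_sub (show 1 ≤ 2 * I by omega), Nat.cast_sub (show 3 ≤ 2 * I by omega),
    Nat.cast_sub (show 1 ≤ Nc s₁ from hNpos _)] at hcast
  linear_combination hcast

end Stmt6

end Crossmatch
end
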